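/- arXiv:0911.3370 — 6 statements merged into one kernel-verified Lean document; each statement's English description precedes it below -/
import Mathlib

section
/- Let ν > 0 and let f : ℕ_a → ℝ. Define the ν-th fractional sum Δ^{-ν} f(t) = (1/Γ(ν))·∑_{s=a}^{t-ν} (t-s-1)^(ν-1) f(s) for t ∈ ℕ_{a+ν}. Then for μ, ν > 0 and all t ∈ ℕ_{a+μ+ν}: Δ^{-ν}(Δ^{-μ} f(t)) = Δ^{-(μ+ν)} f(t). -/
open Finset

/-- Generalized falling factorial `t^(α) = Γ(t+1)/Γ(t-α+1)`. -/
noncomputable def gff (t α : ℝ) : ℝ := Real.Gamma (t + 1) / Real.Gamma (t - α + 1)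

/-- Forward difference operator `Δf(t) = f(t+1) - f(t)`. -/
def fdiff (f : ℝ → ℝ) : ℝ → ℝ := fun t => f (t + 1) - f t

/-- The ν-th fractional sum with base point `a`:
`Δ^{-ν} f(t) = (1/Γ(ν)) ∑_{s=a}^{t-ν} (t-s-1)^(ν-1) f(s)`, the sum running over
`s = a, a+1, ..., t-ν` (for `t ∈ ℕ_{a+ν}`, there are `t-ν-a+1` terms). -/
noncomputable def fsum (ν a : ℝ) (f : ℝ → ℝ) (t : ℝ) : ℝ :=
  (1 / Real.Gamma ν) *
    ∑ j ∈ Finset.range ((⌊t - ν - a⌋).toNat + 1),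
      gff (t - (a + j) - 1) (ν - 1) * f (a + j)

/-- The Caputo-like fractional difference `Δ_*^μ f = Δ^{-(⌈μ⌉-μ)} (Δ^{⌈μ⌉} f)`. -/
noncomputable def caputo (μ a : ℝ) (f : ℝ → ℝ) : ℝ → ℝ :=
  fsum ((⌈μ⌉₊ : ℝ) - μ) a (fdiff^[⌈μ⌉₊] f)


/-- Ascending factorial (Pochhammer) on the reals. -/
noncomputable def rpoch (x : ℝ) : ℕ → ℝ
  | 0 => 1
  | (k+1) => rpoch x k * (x + k)

lemma gamma_rpoch (x : ℝ) (hx : 0 < x) (k : ℕ) :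
    Real.Gamma (x + k) = Real.Gamma x * rpoch x k := by
  induction k with
  | zero => simp [rpoch]
  | succ k ih =>
      have hne : x + k ≠ 0 := by positivity
      have : Real.Gamma (x + k + 1) = (x + k) * Real.Gamma (x + k) :=
        Real.Gamma_add_one hne
      push_cast
      rw [show x + ((k : ℝ) + 1) = x + k + 1 by ring, this, ih, rpoch]
      ring

lemma vandermonde (x y : ℝ) : ∀ m : ℕ,
    ∑ k ∈ range (m + 1), (m.choose k : ℝ) * rpoch x k * rpoch y (m - k)
      = rpoch (x + y) m := by
  intro m
  induction m with
  | zero => simp [rpoch]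
  | succ m ih =>
      have key : ∑ k ∈ range (m + 2), ((m+1).choose k : ℝ) * rpoch x k * rpoch y (m + 1 - k)
          = ∑ k ∈ range (m + 1), (m.choose k : ℝ) * rpoch x k * rpoch y (m - k)
              * ((x + k) + (y + (m - k : ℕ))) := by
        rw [Finset.sum_range_succ' (fun k => ((m+1).choose k : ℝ) * rpoch x k * rpoch y (m + 1 - k)) (m+1)]
        have h1 : ∀ k ∈ range (m+1),
            (((m+1).choose (k+1) : ℕ) : ℝ) * rpoch x (k+1) * rpoch y (m + 1 - (k+1))
            = (m.choose k : ℝ) * rpoch x k * rpoch y (m - k) * (x + k)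
              + (m.choose (k+1) : ℝ) * rpoch x (k+1) * rpoch y (m - k) := by
          intro k hk
          rw [Nat.choose_succ_succ]
          have : m + 1 - (k+1) = m - k := by omega
          rw [this]
          push_cast
          simp [rpoch]
          ring
        rw [Finset.sum_congr rfl h1, Finset.sum_add_distrib]
        -- second piece plus the k=0 boundary term re-forms a shifted sum
        have h2 : (((m+1).choose 0 : ℕ) : ℝ) * rpoch x 0 * rpoch y (m + 1 - 0)
              + ∑ k ∈ range (m+1), (m.choose (k+1) : ℝ) * rpoch x (k+1) * rpoch y (m - k)
            = ∑ k ∈ range (m + 1), (m.choose k : ℝ) * rpoch x k * rpoch y (m - k) * (y + (m - k : ℕ)) := by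
          have h3 : ∀ k ∈ range (m+1),
              (m.choose k : ℝ) * rpoch x k * rpoch y (m - k) * (y + (m - k : ℕ))
              = (m.choose k : ℝ) * rpoch x k * rpoch y (m - k + 1) := by
            intro k hk
            simp [rpoch]; ring
          rw [Finset.sum_congr rfl h3,
            Finset.sum_range_succ' (fun k => (m.choose k : ℝ) * rpoch x k * rpoch y (m - k + 1)) m]
          have h4 : ∀ k ∈ range m,
              (m.choose (k+1) : ℝ) * rpoch x (k+1) * rpoch y (m - (k+1) + 1)
              = (m.choose (k+1) : ℝ) * rpoch x (k+1) * rpoch y (m - k) := by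
            intro k hk
            simp only [mem_range] at hk
            congr 2
            omega
          rw [Finset.sum_congr rfl h4]
          rw [Finset.sum_range_succ (fun k => (m.choose (k+1) : ℝ) * rpoch x (k+1) * rpoch y (m - k)) m]
          simp [rpoch]
          ring
        rw [add_comm, add_left_comm, h2]
        rw [← Finset.sum_add_distrib]
        apply Finset.sum_congr rfl
        intro k hk
        ring
      rw [key]
      have : ∀ k ∈ range (m+1), (m.choose k : ℝ) * rpoch x k * rpoch y (m - k)
            * ((x + k) + (y + (m - k : ℕ)))
          = (m.choose k : ℝ) * rpoch x k * rpoch y (m - k) * (x + y + m) := by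
        intro k hk
        simp only [mem_range] at hk
        have : ((m - k : ℕ) : ℝ) = (m : ℝ) - k := by
          rw [Nat.cast_sub (by omega)]
        rw [this]; ring
      rw [Finset.sum_congr rfl this, ← Finset.sum_mul, ih, rpoch]

lemma vandermonde' (x y : ℝ) (m : ℕ) :
    ∑ k ∈ range (m + 1), rpoch x k / k.factorial * (rpoch y (m - k) / (m - k).factorial)
      = rpoch (x + y) m / m.factorial := by
  rw [← vandermonde x y m, Finset.sum_div]
  apply Finset.sum_congr rfl
  intro k hk
  simp only [mem_range] at hk
  have hk' : k ≤ m := by omega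
  rw [Nat.cast_choose ℝ hk']
  have h1 : (k.factorial : ℝ) ≠ 0 := Nat.cast_ne_zero.mpr k.factorial_ne_zero
  have h2 : ((m - k).factorial : ℝ) ≠ 0 := Nat.cast_ne_zero.mpr (m - k).factorial_ne_zero
  have h3 : (m.factorial : ℝ) ≠ 0 := Nat.cast_ne_zero.mpr m.factorial_ne_zero
  field_simp

lemma gff_eq (x : ℝ) (hx : 0 < x) (p : ℕ) :
    gff (x + p - 1) (x - 1) = Real.Gamma x * rpoch x p / p.factorial := by
  unfold gff
  rw [show x + p - 1 + 1 = x + p by ring,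
      show x + (p : ℝ) - 1 - (x - 1) + 1 = ((p : ℕ) : ℝ) + 1 by ring,
      Real.Gamma_nat_eq_factorial, gamma_rpoch x hx p]

lemma main_key (μ ν : ℝ) (hμ : 0 < μ) (hν : 0 < ν) (n : ℕ) (F : ℕ → ℝ) :
    (1 / Real.Gamma ν) * ∑ j ∈ range (n + 1),
        (Real.Gamma ν * rpoch ν (n - j) / (n - j).factorial) *
          ((1 / Real.Gamma μ) * ∑ i ∈ range (j + 1),
            (Real.Gamma μ * rpoch μ (j - i) / (j - i).factorial) * F i)
      = (1 / Real.Gamma (μ + ν)) * ∑ i ∈ range (n + 1),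
          (Real.Gamma (μ + ν) * rpoch (μ + ν) (n - i) / (n - i).factorial) * F i := by
  have hΓμ : Real.Gamma μ ≠ 0 := (Real.Gamma_pos_of_pos hμ).ne'
  have hΓν : Real.Gamma ν ≠ 0 := (Real.Gamma_pos_of_pos hν).ne'
  have hΓμν : Real.Gamma (μ + ν) ≠ 0 := (Real.Gamma_pos_of_pos (by linarith)).ne'
  have L1 : (1 / Real.Gamma ν) * ∑ j ∈ range (n + 1),
        (Real.Gamma ν * rpoch ν (n - j) / (n - j).factorial) *
          ((1 / Real.Gamma μ) * ∑ i ∈ range (j + 1),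
            (Real.Gamma μ * rpoch μ (j - i) / (j - i).factorial) * F i)
      = ∑ j ∈ range (n + 1), ∑ i ∈ range (j + 1),
          rpoch ν (n - j) / (n - j).factorial * (rpoch μ (j - i) / (j - i).factorial) * F i := by
    rw [Finset.mul_sum]
    apply Finset.sum_congr rfl
    intro j _
    rw [Finset.mul_sum, Finset.mul_sum, Finset.mul_sum]
    apply Finset.sum_congr rfl
    intro i _
    field_simp
  rw [L1]
  have L2 : ∑ j ∈ range (n + 1), ∑ i ∈ range (j + 1),
          rpoch ν (n - j) / (n - j).factorial * (rpoch μ (j - i) / (j - i).factorial) * F i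
      = ∑ i ∈ range (n + 1), ∑ j ∈ Ico i (n + 1),
          rpoch ν (n - j) / (n - j).factorial * (rpoch μ (j - i) / (j - i).factorial) * F i := by
    apply Finset.sum_comm'
    intro j i
    simp only [mem_range, mem_Ico]
    omega
  rw [L2, Finset.mul_sum]
  apply Finset.sum_congr rfl
  intro i hi
  simp only [mem_range] at hi
  have hi' : i ≤ n := by omega
  rw [Finset.sum_Ico_eq_sum_range]
  have hcount : n + 1 - i = (n - i) + 1 := by omega
  rw [hcount]
  have : ∀ k ∈ range ((n - i) + 1),
      rpoch ν (n - (i + k)) / (n - (i + k)).factorial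
        * (rpoch μ ((i + k) - i) / ((i + k) - i).factorial) * F i
      = rpoch μ k / k.factorial * (rpoch ν ((n - i) - k) / ((n - i) - k).factorial) * F i := by
    intro k hk
    simp only [mem_range] at hk
    have e1 : n - (i + k) = (n - i) - k := by omega
    have e2 : (i + k) - i = k := by omega
    rw [e1, e2]
    ring
  rw [Finset.sum_congr rfl this, ← Finset.sum_mul, vandermonde' μ ν (n - i)]
  field_simp


theorem stmt5 (μ ν a : ℝ) (hμ : 0 < μ) (hν : 0 < ν) (f : ℝ → ℝ) (n : ℕ)
    (t : ℝ) (ht : t = a + μ + ν + n) :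
    fsum ν (a + μ) (fsum μ a f) t = fsum (μ + ν) a f t := by
  subst ht
  have inner : ∀ j : ℕ, fsum μ a f (a + μ + (j : ℝ)) =
      (1 / Real.Gamma μ) * ∑ i ∈ range (j + 1),
        (Real.Gamma μ * rpoch μ (j - i) / (j - i).factorial) * f (a + i) := by
    intro j
    rw [fsum, show a + μ + (j : ℝ) - μ - a = ((j : ℕ) : ℝ) by ring,
      Int.floor_natCast, Int.toNat_natCast]
    congr 1
    apply Finset.sum_congr rfl
    intro i hi
    simp only [mem_range] at hi
    rw [show a + μ + (j : ℝ) - (a + (i : ℝ)) - 1 = μ + ((j - i : ℕ) : ℝ) - 1 by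
        rw [Nat.cast_sub (by omega)]; ring, gff_eq μ hμ]
  have LHS_eq : fsum ν (a + μ) (fsum μ a f) (a + μ + ν + (n : ℝ))
      = (1 / Real.Gamma ν) * ∑ j ∈ range (n + 1),
          (Real.Gamma ν * rpoch ν (n - j) / (n - j).factorial) *
            ((1 / Real.Gamma μ) * ∑ i ∈ range (j + 1),
              (Real.Gamma μ * rpoch μ (j - i) / (j - i).factorial) * f (a + i)) := by
    rw [fsum, show a + μ + ν + (n : ℝ) - ν - (a + μ) = ((n : ℕ) : ℝ) by ring,
      Int.floor_natCast, Int.toNat_natCast]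
    congr 1
    apply Finset.sum_congr rfl
    intro j hj
    simp only [mem_range] at hj
    rw [show a + μ + ν + (n : ℝ) - (a + μ + (j : ℝ)) - 1 = ν + ((n - j : ℕ) : ℝ) - 1 by
        rw [Nat.cast_sub (by omega)]; ring, gff_eq ν hν, inner j]
  have RHS_eq : fsum (μ + ν) a f (a + μ + ν + (n : ℝ))
      = (1 / Real.Gamma (μ + ν)) * ∑ i ∈ range (n + 1),
          (Real.Gamma (μ + ν) * rpoch (μ + ν) (n - i) / (n - i).factorial) * f (a + i) := by
    rw [fsum, show a + μ + ν + (n : ℝ) - (μ + ν) - a = ((n : ℕ) : ℝ) by ring,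
      Int.floor_natCast, Int.toNat_natCast]
    congr 1
    apply Finset.sum_congr rfl
    intro i hi
    simp only [mem_range] at hi
    rw [show a + μ + ν + (n : ℝ) - (a + (i : ℝ)) - 1 = (μ + ν) + ((n - i : ℕ) : ℝ) - 1 by
        rw [Nat.cast_sub (by omega)]; ring, gff_eq (μ + ν) (by linarith)]
  rw [LHS_eq, RHS_eq, main_key μ ν hμ hν n (fun i => f (a + i))]
end

section
/- Let ν > 0 and p a positive integer, f defined on ℕ_a. Then for t ∈ ℕ_{a+ν}: Δ^{-ν}(Δ^p f(t)) = Δ^p(Δ^{-ν} f(t)) - ∑_{k=0}^{p-1} ((t-a)^(ν-p+k)/Γ(ν+k-p+1))·Δ^k f(a). -/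
open Finset

lemma gamma_recip (x : ℝ) : 1 / Real.Gamma x = x / Real.Gamma (x + 1) := by
  by_cases hx : x = 0
  · simp [hx, Real.Gamma_zero]
  · rw [Real.Gamma_add_one hx]
    by_cases hg : Real.Gamma x = 0
    · simp [hg]
    · field_simp

lemma gff_fdiff (α s : ℝ) (hs : s + 1 ≠ 0) :
    gff (s + 1) α - gff s α = α * gff s (α - 1) := by
  have h2 : Real.Gamma (s + 1 + 1) = (s + 1) * Real.Gamma (s + 1) := Real.Gamma_add_one hs
  unfold gff
  have e1 : s + 1 - α + 1 = (s - α + 1) + 1 := by ring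
  have e2 : s - (α - 1) + 1 = (s - α + 1) + 1 := by ring
  rw [e1, e2, h2]
  set u := s - α + 1 with hu
  by_cases hz : u = 0
  · have hα : α = s + 1 := by simp [hu] at hz; linarith
    rw [hz]
    simp [Real.Gamma_zero, Real.Gamma_one, hα]
  · rw [Real.Gamma_add_one hz]
    by_cases hg : Real.Gamma u = 0
    · simp [hg]
    · have hαu : α = s + 1 - u := by rw [hu]; ring
      field_simp
      rw [hαu]

lemma step_term (s α : ℝ) (hs : s + 1 ≠ 0) :
    gff (s + 1) α / Real.Gamma (α + 1) - gff s α / Real.Gamma (α + 1)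
      = gff s (α - 1) / Real.Gamma α := by
  rw [div_sub_div_same, gff_fdiff α s hs,
    div_eq_mul_one_div (gff s (α - 1)) (Real.Gamma α), gamma_recip]
  ring

lemma abel_sum (m : ℕ) (D G : ℕ → ℝ) :
    ∑ j ∈ Finset.range (m + 1), D (j + 1) * (G (j + 1) - G j)
      = (∑ j ∈ Finset.range (m + 2), D j * G j) - D 0 * G 0
        - ∑ j ∈ Finset.range (m + 1), D (j + 1) * G j := by
  rw [Finset.sum_range_succ' (fun j => D j * G j) (m + 1)]
  simp only [mul_sub]
  rw [Finset.sum_sub_distrib]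
  ring

lemma floor_lem (ν a : ℝ) (n : ℕ) : (⌊(a + ν + n) - ν - a⌋).toNat = n := by
  have h : (a + ν + n) - ν - a = (n : ℝ) := by ring
  rw [h, Int.floor_natCast, Int.toNat_natCast]

lemma base (ν a : ℝ) (g : ℝ → ℝ) (m : ℕ) :
    fsum ν a (fdiff g) (a + ν + m) =
      fdiff (fsum ν a g) (a + ν + m)
        - gff (ν + m) (ν - 1) / Real.Gamma ν * g a := by
  set D : ℕ → ℝ := fun j => gff (ν + m - j) (ν - 1) with hD
  set G : ℕ → ℝ := fun j => g (a + j) with hG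
  have hf1 : (⌊(a + ν + m) - ν - a⌋).toNat = m := floor_lem ν a m
  have hf2 : (⌊(a + ν + m + 1) - ν - a⌋).toNat = m + 1 := by
    have h : a + ν + (m:ℝ) + 1 = a + ν + ((m+1 : ℕ) : ℝ) := by push_cast; ring
    rw [h, floor_lem ν a (m+1)]
  show fsum ν a (fdiff g) (a + ν + m)
      = (fsum ν a g (a + ν + m + 1) - fsum ν a g (a + ν + m))
        - gff (ν + m) (ν - 1) / Real.Gamma ν * g a
  unfold fsum
  rw [hf1, hf2]
  have r0 : ∑ j ∈ Finset.range (m + 1),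
      gff (a + ν + m - (a + j) - 1) (ν - 1) * (fdiff g) (a + j)
      = ∑ j ∈ Finset.range (m + 1), D (j + 1) * (G (j + 1) - G j) := by
    refine Finset.sum_congr rfl fun j _ => ?_
    have h1 : a + ν + (m:ℝ) - (a + j) - 1 = ν + m - ((j:ℕ)+1 : ℕ) := by push_cast; ring
    have h2 : a + (j:ℝ) + 1 = a + (((j:ℕ)+1 : ℕ) : ℝ) := by push_cast; ring
    show gff (a + ν + m - (a + j) - 1) (ν - 1) * (g (a + j + 1) - g (a + j)) = _
    rw [h1, h2]
  have r1 : ∑ j ∈ Finset.range (m + 1 + 1),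
      gff (a + ν + m + 1 - (a + j) - 1) (ν - 1) * g (a + j)
      = ∑ j ∈ Finset.range (m + 2), D j * G j := by
    refine Finset.sum_congr rfl fun j _ => ?_
    have h1 : a + ν + (m:ℝ) + 1 - (a + j) - 1 = ν + m - j := by ring
    rw [h1]
  have r2 : ∑ j ∈ Finset.range (m + 1),
      gff (a + ν + m - (a + j) - 1) (ν - 1) * g (a + j)
      = ∑ j ∈ Finset.range (m + 1), D (j + 1) * G j := by
    refine Finset.sum_congr rfl fun j _ => ?_
    have h1 : a + ν + (m:ℝ) - (a + j) - 1 = ν + m - ((j:ℕ)+1 : ℕ) := by push_cast; ring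
    rw [h1]
  rw [r0, r1, r2, abel_sum]
  have hD0 : D 0 = gff (ν + m) (ν - 1) := by simp [hD]
  have hG0 : G 0 = g a := by simp [hG]
  rw [hD0, hG0]
  ring

lemma main_aux (ν a : ℝ) (hν : 0 < ν) (f : ℝ → ℝ) (p : ℕ) :
    ∀ n : ℕ, fsum ν a (fdiff^[p+1] f) (a + ν + n) =
      fdiff^[p+1] (fsum ν a f) (a + ν + n) -
        ∑ k ∈ Finset.range (p+1),
          gff (ν + n) (ν - (p+1 : ℕ) + k) / Real.Gamma (ν + k - (p+1 : ℕ) + 1)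
            * fdiff^[k] f a := by
  induction p with
  | zero =>
    intro n
    rw [Finset.sum_range_one]
    have h1 : ν - ((0+1 : ℕ) : ℝ) + ((0:ℕ) : ℝ) = ν - 1 := by push_cast; ring
    have h2 : ν + ((0:ℕ) : ℝ) - ((0+1 : ℕ) : ℝ) + 1 = ν := by push_cast; ring
    rw [h1, h2]
    simpa [div_eq_mul_inv, div_eq_mul_inv] using base ν a f n
  | succ p ih =>
    intro n
    have hcast : a + ν + (n:ℝ) + 1 = a + ν + ((n+1:ℕ):ℝ) := by push_cast; ring
    have hiter : fdiff^[p+1+1] f = fdiff (fdiff^[p+1] f) :=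
      Function.iterate_succ_apply' fdiff (p+1) f
    have hfd : fdiff (fsum ν a (fdiff^[p+1] f)) (a + ν + n)
        = fsum ν a (fdiff^[p+1] f) (a + ν + ((n+1:ℕ):ℝ))
          - fsum ν a (fdiff^[p+1] f) (a + ν + n) := by
      rw [← hcast]; rfl
    have hiter2 : fdiff^[p+1+1] (fsum ν a f) (a + ν + n)
        = fdiff^[p+1] (fsum ν a f) (a + ν + ((n+1:ℕ):ℝ))
          - fdiff^[p+1] (fsum ν a f) (a + ν + n) := by
      rw [Function.iterate_succ_apply' fdiff (p+1) (fsum ν a f), ← hcast]; rfl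
    rw [hiter, base ν a (fdiff^[p+1] f) n, hfd, ih (n+1), ih n, hiter2]
    have hT : ∑ k ∈ Finset.range (p+1+1),
        gff (ν + n) (ν - ((p+1+1 : ℕ):ℝ) + k) / Real.Gamma (ν + k - ((p+1+1 : ℕ):ℝ) + 1)
          * fdiff^[k] f a
        = (∑ k ∈ Finset.range (p+1),
            gff (ν + n) (ν - ((p+1+1 : ℕ):ℝ) + k) / Real.Gamma (ν + k - ((p+1+1 : ℕ):ℝ) + 1)
              * fdiff^[k] f a)
          + gff (ν + n) (ν - ((p+1+1 : ℕ):ℝ) + ((p+1:ℕ):ℝ))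
              / Real.Gamma (ν + ((p+1:ℕ):ℝ) - ((p+1+1 : ℕ):ℝ) + 1) * fdiff^[p+1] f a :=
      Finset.sum_range_succ _ (p+1)
    have hc : gff (ν + n) (ν - ((p+1+1 : ℕ):ℝ) + ((p+1:ℕ):ℝ))
        / Real.Gamma (ν + ((p+1:ℕ):ℝ) - ((p+1+1 : ℕ):ℝ) + 1) * fdiff^[p+1] f a
        = gff (ν + n) (ν - 1) / Real.Gamma ν * fdiff^[p+1] f a := by
      have e1 : ν - ((p+1+1 : ℕ):ℝ) + ((p+1:ℕ):ℝ) = ν - 1 := by push_cast; ring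
      have e2 : ν + ((p+1:ℕ):ℝ) - ((p+1+1 : ℕ):ℝ) + 1 = ν := by push_cast; ring
      rw [e1, e2]
    have hS : ∑ k ∈ Finset.range (p+1),
        gff (ν + n) (ν - ((p+1+1 : ℕ):ℝ) + k) / Real.Gamma (ν + k - ((p+1+1 : ℕ):ℝ) + 1)
          * fdiff^[k] f a
        = (∑ k ∈ Finset.range (p+1),
            gff (ν + ((n+1:ℕ):ℝ)) (ν - ((p+1 : ℕ):ℝ) + k)
              / Real.Gamma (ν + k - ((p+1 : ℕ):ℝ) + 1) * fdiff^[k] f a)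
          - ∑ k ∈ Finset.range (p+1),
            gff (ν + n) (ν - ((p+1 : ℕ):ℝ) + k)
              / Real.Gamma (ν + k - ((p+1 : ℕ):ℝ) + 1) * fdiff^[k] f a := by
      rw [← Finset.sum_sub_distrib]
      refine Finset.sum_congr rfl fun k _ => ?_
      rw [← sub_mul]
      congr 1
      have e1 : ν + ((n+1:ℕ):ℝ) = (ν + n) + 1 := by push_cast; ring
      have e2 : ν + (k:ℝ) - ((p+1 : ℕ):ℝ) + 1 = (ν - ((p+1 : ℕ):ℝ) + k) + 1 := by ring
      have e3 : ν - ((p+1+1 : ℕ):ℝ) + (k:ℝ) = (ν - ((p+1 : ℕ):ℝ) + k) - 1 := by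
        push_cast; ring
      have e4 : ν + (k:ℝ) - ((p+1+1 : ℕ):ℝ) + 1 = ν - ((p+1 : ℕ):ℝ) + k := by
        push_cast; ring
      rw [e1, e2, e3, e4]
      exact (step_term (ν + n) (ν - ((p+1 : ℕ):ℝ) + k) (by positivity)).symm
    linarith [hT, hc, hS]

theorem stmt7 (ν : ℝ) (hν : 0 < ν) (p : ℕ) (hp : 0 < p) (a : ℝ) (f : ℝ → ℝ)
    (n : ℕ) (t : ℝ) (ht : t = a + ν + n) :
    fsum ν a (fdiff^[p] f) t =
      fdiff^[p] (fsum ν a f) t -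
        ∑ k ∈ Finset.range p,
          gff (t - a) (ν - p + k) / Real.Gamma (ν + k - p + 1) * fdiff^[k] f a := by
  subst ht
  obtain ⟨q, rfl⟩ : ∃ q, p = q + 1 := ⟨p - 1, (Nat.succ_pred_eq_of_pos hp).symm⟩
  rw [main_aux ν a hν f q n, show a + ν + (n:ℝ) - a = ν + (n:ℝ) from by ring]
end

section
/- Let μ > 0 be non-integer, m = ⌈μ⌉, ν = m - μ, f defined on ℕ_a, a ∈ ℤ⁺, and suppose Δ^k f(a) = 0 for k = 0, 1, ..., m-1. Then for all t ∈ ℕ_{a+m}: f(t) = (1/Γ(μ))·∑_{s=a+ν}^{t-μ} (t-s-1)^(μ-1)·Δ_*^μ f(s). -/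
open Finset

/-! ### Auxiliary lemmas -/

/-- `Bc x k = Γ(x+k)/(Γ(x)·k!)`, the generalized binomial coefficient `C(x+k-1, k)`. -/
noncomputable def Bc (x : ℝ) (k : ℕ) : ℝ :=
  Real.Gamma (x + k) / (Real.Gamma x * k.factorial)

lemma Bc_zero (x : ℝ) (hx : Real.Gamma x ≠ 0) : Bc x 0 = 1 := by
  simp [Bc, div_self hx]

lemma Bc_succ (x : ℝ) (hx : 0 < x) (k : ℕ) :
    Bc x (k + 1) * (k + 1) = Bc x k * (x + k) := by
  have hne : x + (k : ℝ) ≠ 0 := by positivity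
  have h1 : Real.Gamma (x + (k + 1 : ℕ)) = (x + k) * Real.Gamma (x + k) := by
    rw [show x + ((k + 1 : ℕ) : ℝ) = (x + k) + 1 by push_cast; ring, Real.Gamma_add_one hne]
  have hΓ : Real.Gamma x ≠ 0 := ne_of_gt (Real.Gamma_pos_of_pos hx)
  have hf : ((k + 1 : ℕ).factorial : ℝ) = (k.factorial : ℝ) * (k + 1) := by
    rw [Nat.factorial_succ]; push_cast; ring
  have hfk : (k.factorial : ℝ) ≠ 0 := by positivity
  rw [Bc, Bc, h1, hf]
  field_simp

lemma Bc_vandermonde (x y : ℝ) (hx : 0 < x) (hy : 0 < y) (n : ℕ) :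
    ∑ k ∈ range (n + 1), Bc x k * Bc y (n - k) = Bc (x + y) n := by
  induction n with
  | zero => simp [Bc_zero x (ne_of_gt (Real.Gamma_pos_of_pos hx)),
      Bc_zero y (ne_of_gt (Real.Gamma_pos_of_pos hy)),
      Bc_zero (x+y) (ne_of_gt (Real.Gamma_pos_of_pos (by positivity)))]
  | succ n ih =>
    have hn1 : ((n : ℝ) + 1) ≠ 0 := by positivity
    have key : (∑ k ∈ range (n + 2), Bc x k * Bc y (n + 1 - k)) * ((n : ℝ) + 1)
        = Bc (x + y) (n + 1) * ((n : ℝ) + 1) := by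
      have expand : ∀ k ∈ range (n + 2),
          Bc x k * Bc y (n + 1 - k) * ((n : ℝ) + 1)
          = Bc x k * (k : ℝ) * Bc y (n + 1 - k)
            + Bc x k * (Bc y (n + 1 - k) * ((n + 1 - k : ℕ) : ℝ)) := by
        intro k hk
        have hk' : k ≤ n + 1 := by simpa [Nat.lt_succ_iff] using hk
        have : ((n + 1 - k : ℕ) : ℝ) = (n : ℝ) + 1 - k := by
          push_cast [Nat.cast_sub hk']; ring
        rw [this]; ring
      rw [Finset.sum_mul, Finset.sum_congr rfl expand, Finset.sum_add_distrib]
      have hA : ∑ k ∈ range (n + 2), Bc x k * (k : ℝ) * Bc y (n + 1 - k)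
          = ∑ k ∈ range (n + 1), Bc x k * (x + k) * Bc y (n - k) := by
        rw [Finset.sum_range_succ' (fun k => Bc x k * (k : ℝ) * Bc y (n + 1 - k)) (n+1)]
        simp only [Nat.cast_zero, mul_zero, zero_mul, add_zero]
        refine Finset.sum_congr rfl fun k hk => ?_
        have h1 : Bc x (k+1) * ((k:ℝ)+1) = Bc x k * (x + k) := by
          simpa using Bc_succ x hx k
        have h2 : n + 1 - (k + 1) = n - k := by omega
        rw [h2]; push_cast; rw [h1]
      have hC : ∑ k ∈ range (n + 2), Bc x k * (Bc y (n + 1 - k) * ((n + 1 - k : ℕ) : ℝ))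
          = ∑ k ∈ range (n + 1), Bc x k * (Bc y (n - k) * (y + (n - k : ℕ))) := by
        rw [Finset.sum_range_succ]
        simp only [Nat.sub_self, Nat.cast_zero, mul_zero, add_zero]
        refine Finset.sum_congr rfl fun k hk => ?_
        have hk' : k ≤ n := by simpa [Nat.lt_succ_iff] using hk
        have h2 : n + 1 - k = (n - k) + 1 := by omega
        rw [h2]
        have h1 := Bc_succ y hy (n - k)
        push_cast at h1 ⊢
        rw [h1]
      rw [hA, hC, ← Finset.sum_add_distrib]
      have : ∀ k ∈ range (n + 1),
          Bc x k * (x + k) * Bc y (n - k) + Bc x k * (Bc y (n - k) * (y + (n - k : ℕ)))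
          = Bc x k * Bc y (n - k) * (x + y + n) := by
        intro k hk
        have hk' : k ≤ n := by simpa [Nat.lt_succ_iff] using hk
        have : ((n - k : ℕ) : ℝ) = (n : ℝ) - k := by push_cast [Nat.cast_sub hk']; ring
        rw [this]; ring
      rw [Finset.sum_congr rfl this, ← Finset.sum_mul, ih]
      have h3 := Bc_succ (x + y) (by positivity) n
      rw [h3]
    exact mul_right_cancel₀ hn1 key

lemma Bc_nat (m : ℕ) (hm : 1 ≤ m) (n : ℕ) :
    Bc (m : ℝ) n = (((m - 1 + n).choose n : ℕ) : ℝ) := by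
  have h1 : Real.Gamma ((m:ℝ) + n) = ((m - 1 + n).factorial : ℝ) := by
    rw [show (m:ℝ) + n = ((m - 1 + n : ℕ) : ℝ) + 1 by push_cast [Nat.cast_sub hm]; ring,
      Real.Gamma_nat_eq_factorial]
  have h2 : Real.Gamma (m:ℝ) = ((m-1).factorial : ℝ) := by
    rw [show (m:ℝ) = ((m - 1 : ℕ):ℝ) + 1 by push_cast [Nat.cast_sub hm]; ring,
      Real.Gamma_nat_eq_factorial]
  have hcast := Nat.cast_choose ℝ (show n ≤ m - 1 + n by omega)
  rw [Bc, h1, h2, hcast, show m - 1 + n - n = m - 1 by omega]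
  ring

lemma gff_eval (x : ℝ) (k : ℕ) :
    gff (x + k - 1) (x - 1) = Real.Gamma (x + k) / k.factorial := by
  rw [gff, show x + k - 1 + 1 = x + k by ring,
    show x + k - 1 - (x - 1) + 1 = (k:ℝ) + 1 by ring, Real.Gamma_nat_eq_factorial]

lemma fdiff_eq_fwdDiff : fdiff = fwdDiff (1 : ℝ) := rfl

/-- Hockey stick identity. -/
lemma hockey (m : ℕ) : ∀ n : ℕ, ∑ k ∈ range (n + 1), (m + k).choose k = (m + n + 1).choose n := by
  intro n
  induction n with
  | zero => simp
  | succ n ih =>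
    rw [Finset.sum_range_succ, ih]
    rw [show m + (n+1) + 1 = (m + n + 1) + 1 by ring, Nat.choose_succ_succ,
      show m + (n+1) = m + n + 1 by ring]

/-- Interchange a triangular double sum. -/
lemma tri_swap (F : ℕ → ℕ → ℝ) : ∀ j : ℕ,
    ∑ i ∈ range (j + 1), ∑ s ∈ range (i + 1), F i s
      = ∑ s ∈ range (j + 1), ∑ i ∈ Finset.Icc s j, F i s := by
  intro j
  induction j with
  | zero => simp
  | succ j ih =>
    rw [Finset.sum_range_succ, ih, Finset.sum_range_succ (fun s => ∑ i ∈ Finset.Icc s (j+1), F i s)]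
    have h1 : ∀ s ∈ range (j + 1),
        ∑ i ∈ Finset.Icc s (j+1), F i s = (∑ i ∈ Finset.Icc s j, F i s) + F (j+1) s := by
      intro s hs
      have hs' : s ≤ j := by simpa [Nat.lt_succ_iff] using hs
      rw [← Finset.Ico_add_one_right_eq_Icc, Finset.sum_Ico_succ_top (by omega), Finset.Ico_add_one_right_eq_Icc]
    rw [Finset.sum_congr rfl h1, Finset.sum_add_distrib]
    have h2 : Finset.Icc (j+1) (j+1) = {j+1} := by simp
    rw [h2, Finset.sum_singleton, Finset.sum_range_succ (fun s => F (j+1) s)]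
    ring

lemma telescope (f : ℝ → ℝ) (a : ℕ) : ∀ n : ℕ,
    f ((a : ℝ) + n) = f a + ∑ r ∈ range n, fdiff f ((a : ℝ) + r) := by
  intro n
  induction n with
  | zero => simp
  | succ n ih =>
    rw [Finset.sum_range_succ, ← add_assoc, ← ih]
    rw [show ((a : ℝ) + (n + 1 : ℕ)) = ((a : ℝ) + n) + 1 by push_cast; ring]
    simp [fdiff]

lemma zero_on (m : ℕ) (f : ℝ → ℝ) (a : ℕ) (hz : ∀ k < m, fdiff^[k] f a = 0) :
    ∀ r < m, f ((a : ℝ) + r) = 0 := by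
  intro r hr
  have h := shift_eq_sum_fwdDiff_iter (1 : ℝ) f r (a : ℝ)
  have hc : (a : ℝ) + r • (1 : ℝ) = (a : ℝ) + r := by simp
  rw [hc] at h
  rw [h]
  refine Finset.sum_eq_zero fun k hk => ?_
  have hk' : k < m := by have := Finset.mem_range.mp hk; omega
  rw [← fdiff_eq_fwdDiff, hz k hk', smul_zero]

/-- Discrete Taylor formula with vanishing initial conditions. -/
lemma taylor (a : ℕ) : ∀ m : ℕ, 1 ≤ m → ∀ f : ℝ → ℝ, (∀ k < m, fdiff^[k] f a = 0) →
    ∀ j : ℕ, f ((a : ℝ) + m + j)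
      = ∑ s ∈ range (j + 1), (((m - 1 + (j - s)).choose (j - s) : ℕ) : ℝ)
          * fdiff^[m] f ((a : ℝ) + s) := by
  intro m
  induction m with
  | zero => omega
  | succ m ih =>
    intro _ f hz j
    by_cases hm : m = 0
    · subst hm
      have h := telescope f a (j + 1)
      have hfa : f a = 0 := by simpa using hz 0 (by omega)
      rw [show ((a:ℝ) + (1:ℕ) + j) = (a:ℝ) + ((j+1 : ℕ) : ℝ) by push_cast; ring, h, hfa, zero_add]
      refine Finset.sum_congr rfl fun s hs => ?_
      simp
    · have hm1 : 1 ≤ m := by omega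
      set g := fdiff f with hg
      have hzg : ∀ k < m, fdiff^[k] g a = 0 := by
        intro k hk
        have := hz (k + 1) (by omega)
        rwa [Function.iterate_succ_apply] at this
      have hfa : f a = 0 := by simpa using hz 0 (by omega)
      have h := telescope f a (m + 1 + j)
      rw [show ((a:ℝ) + (m+1:ℕ) + j) = (a:ℝ) + ((m + 1 + j : ℕ) : ℝ) by push_cast; ring, h, hfa,
        zero_add, ← hg]
      rw [show m + 1 + j = m + (j + 1) by ring, Finset.sum_range_add]
      have hz0 : ∑ r ∈ range m, g ((a:ℝ) + r) = 0 :=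
        Finset.sum_eq_zero fun r hr => zero_on m g a hzg r (Finset.mem_range.mp hr)
      rw [hz0, zero_add]
      have hIH : ∀ i ∈ range (j + 1), g ((a:ℝ) + (m + i : ℕ))
          = ∑ s ∈ range (i + 1), (((m - 1 + (i - s)).choose (i - s) : ℕ) : ℝ)
              * fdiff^[m + 1] f ((a : ℝ) + s) := by
        intro i _
        have := ih hm1 g hzg i
        rw [show ((a:ℝ) + (m + i : ℕ)) = (a:ℝ) + m + i by push_cast; ring, this]
        refine Finset.sum_congr rfl fun s _ => ?_
        rw [hg, ← Function.iterate_succ_apply]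
      rw [Finset.sum_congr rfl hIH, tri_swap]
      refine Finset.sum_congr rfl fun s hs => ?_
      have hs' : s ≤ j := by simpa [Nat.lt_succ_iff] using hs
      have hcoef : ∑ i ∈ Finset.Icc s j, ((m - 1 + (i - s)).choose (i - s))
          = (m + 1 - 1 + (j - s)).choose (j - s) := by
        rw [← Finset.Ico_add_one_right_eq_Icc, Finset.sum_Ico_eq_sum_range]
        calc ∑ k ∈ range (j + 1 - s), (m - 1 + ((s+k) - s)).choose ((s+k)-s)
            = ∑ k ∈ range ((j - s) + 1), (m - 1 + k).choose k := by
              rw [show j + 1 - s = (j - s) + 1 by omega]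
              exact Finset.sum_congr rfl fun k _ => by congr 1 <;> omega
          _ = (m - 1 + (j - s) + 1).choose (j - s) := hockey (m-1) (j-s)
          _ = (m + 1 - 1 + (j - s)).choose (j - s) := by congr 1; omega
      rw [← Finset.sum_mul, ← Nat.cast_sum, hcoef]

theorem stmt10 (μ ν : ℝ) (hμ : 0 < μ) (hni : ∀ n : ℤ, μ ≠ n) (m : ℕ)
    (hm : m = ⌈μ⌉₊) (hν : ν = m - μ) (f : ℝ → ℝ) (a : ℕ)
    (hz : ∀ k < m, fdiff^[k] f a = 0) (j : ℕ) (t : ℝ) (ht : t = a + m + j) :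
    f t =
      (1 / Real.Gamma μ) *
        ∑ i ∈ Finset.range (j + 1),
          gff (t - (a + ν + i) - 1) (μ - 1) * caputo μ a f (a + ν + i) := by
  have hm1 : 1 ≤ m := by rw [hm]; exact Nat.one_le_iff_ne_zero.mpr (Nat.ceil_pos.mpr hμ).ne'
  have hμm : μ < m := by
    rcases lt_or_eq_of_le (Nat.le_ceil μ) with h | h
    · rw [hm]; exact h
    · exact absurd (by exact_mod_cast h) (hni (⌈μ⌉₊ : ℤ))
  have hν0 : 0 < ν := by rw [hν]; linarith
  have hΓμ : Real.Gamma μ ≠ 0 := ne_of_gt (Real.Gamma_pos_of_pos hμ)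
  have hΓν : Real.Gamma ν ≠ 0 := ne_of_gt (Real.Gamma_pos_of_pos hν0)
  have hμν : ν + μ = (m : ℝ) := by rw [hν]; ring
  set g := fdiff^[m] f with hgdef
  -- Step 1: evaluate the Caputo difference at the grid points
  have hcap : ∀ i : ℕ, caputo μ a f ((a:ℝ) + ν + i)
      = ∑ s ∈ range (i + 1), Bc ν (i - s) * g ((a:ℝ) + s) := by
    intro i
    rw [caputo, ← hm, ← hν, fsum]
    have hfl : (⌊(a:ℝ) + ν + i - ν - a⌋).toNat = i := by
      rw [show (a:ℝ) + ν + i - ν - a = ((i:ℕ):ℝ) by push_cast; ring]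
      simp
    rw [hfl, Finset.mul_sum]
    refine Finset.sum_congr rfl fun s hs => ?_
    have hsi : s ≤ i := by simpa [Nat.lt_succ_iff] using hs
    rw [show (a:ℝ) + ν + i - ((a:ℝ) + s) - 1 = ν + ((i - s : ℕ):ℝ) - 1 by
      push_cast [Nat.cast_sub hsi]; ring, gff_eval ν (i - s), Bc, ← hgdef]
    field_simp
  -- Step 2: rewrite the outer kernel
  have houter : ∀ i ∈ range (j + 1),
      gff (t - ((a:ℝ) + ν + i) - 1) (μ - 1) * caputo μ a f ((a:ℝ) + ν + i)
      = Real.Gamma μ * ∑ s ∈ range (i + 1),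
          Bc μ (j - i) * (Bc ν (i - s) * g ((a:ℝ) + s)) := by
    intro i hi
    have hij : i ≤ j := by simpa [Nat.lt_succ_iff] using hi
    rw [show t - ((a:ℝ) + ν + i) - 1 = μ + ((j - i : ℕ):ℝ) - 1 by
      rw [ht, hν]; push_cast [Nat.cast_sub hij]; ring, gff_eval μ (j - i), hcap i,
      Finset.mul_sum, Finset.mul_sum]
    refine Finset.sum_congr rfl fun s hs => ?_
    simp only [Bc]
    field_simp
  rw [Finset.sum_congr rfl houter, ← Finset.mul_sum, one_div, inv_mul_cancel_left₀ hΓμ]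
  -- Step 3: swap the double sum and apply Vandermonde
  rw [tri_swap (fun i s => Bc μ (j - i) * (Bc ν (i - s) * g ((a:ℝ) + s)))]
  have hinner : ∀ s ∈ range (j + 1),
      ∑ i ∈ Finset.Icc s j, Bc μ (j - i) * (Bc ν (i - s) * g ((a:ℝ) + s))
      = (((m - 1 + (j - s)).choose (j - s) : ℕ) : ℝ) * g ((a:ℝ) + s) := by
    intro s hs
    have hsj : s ≤ j := by simpa [Nat.lt_succ_iff] using hs
    have h1 : ∀ i ∈ Finset.Icc s j, Bc μ (j - i) * (Bc ν (i - s) * g ((a:ℝ) + s))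
        = (Bc ν (i - s) * Bc μ (j - i)) * g ((a:ℝ) + s) := fun i _ => by ring
    rw [Finset.sum_congr rfl h1, ← Finset.sum_mul]
    congr 1
    rw [← Finset.Ico_add_one_right_eq_Icc, Finset.sum_Ico_eq_sum_range]
    calc ∑ k ∈ range (j + 1 - s), Bc ν ((s+k) - s) * Bc μ (j - (s+k))
        = ∑ k ∈ range ((j - s) + 1), Bc ν k * Bc μ ((j - s) - k) := by
          rw [show j + 1 - s = (j - s) + 1 by omega]
          refine Finset.sum_congr rfl fun k _ => by
            rw [show (s+k) - s = k by omega, show j - (s+k) = (j-s) - k by omega]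
      _ = Bc (ν + μ) (j - s) := Bc_vandermonde ν μ hν0 hμ (j - s)
      _ = (((m - 1 + (j - s)).choose (j - s) : ℕ) : ℝ) := by rw [hμν, Bc_nat m hm1 (j - s)]
  rw [Finset.sum_congr rfl hinner]
  rw [ht, show (a:ℝ) + m + j = (a:ℝ) + (m:ℕ) + (j:ℕ) by push_cast; ring]
  exact taylor a m hm1 f hz j
end

section
/- Let μ > 0 be non-integer, m = ⌈μ⌉, ν = m - μ, t ∈ ℕ_{a+m}, f defined on ℕ_a, a ∈ ℤ⁺. Then |f(t) - ∑_{k=0}^{m-1} ((t-a)^(k)/k!)·Δ^k f(a)| ≤ ((t-a-ν)^(μ)/Γ(μ+1))·max_{s ∈ {a+ν, a+ν+1, ..., t-μ}} |Δ_*^μ f(s)|. -/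
open Finset

noncomputable def wfn (x : ℝ) (d : ℕ) : ℝ := Real.Gamma (x + d) / d.factorial

lemma wfn_pos {x : ℝ} (hx : 0 < x) (d : ℕ) : 0 < wfn x d := by
  unfold wfn
  exact div_pos (Real.Gamma_pos_of_pos (by positivity)) (by positivity)

lemma wfn_succ {x : ℝ} (hx : 0 < x) (d : ℕ) :
    ((d : ℝ) + 1) * wfn x (d + 1) = (x + d) * wfn x d := by
  have h0 : x + (d : ℝ) ≠ 0 := by positivity
  have hg : Real.Gamma (x + ((d : ℕ) + 1 : ℕ)) = (x + d) * Real.Gamma (x + d) := by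
    push_cast
    rw [show x + ((d : ℝ) + 1) = (x + d) + 1 by ring, Real.Gamma_add_one h0]
  unfold wfn
  rw [hg, Nat.factorial_succ]
  have h1 : ((d.factorial : ℝ)) ≠ 0 := by positivity
  push_cast
  field_simp

lemma wfn_one (d : ℕ) : wfn 1 d = 1 := by
  unfold wfn
  rw [show (1 : ℝ) + d = (d : ℝ) + 1 by ring, Real.Gamma_nat_eq_factorial]
  have : ((d.factorial : ℝ)) ≠ 0 := by positivity
  field_simp

lemma vdm {x y : ℝ} (hx : 0 < x) (hy : 0 < y) (n : ℕ) :
    ∑ i ∈ Finset.range (n + 1), wfn x i * wfn y (n - i) =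
      Real.Gamma x * Real.Gamma y / Real.Gamma (x + y) * wfn (x + y) n := by
  induction n with
  | zero =>
      rw [Finset.sum_range_one]
      have h0 : wfn x 0 = Real.Gamma x := by simp [wfn]
      have h1 : wfn y 0 = Real.Gamma y := by simp [wfn]
      have h2 : wfn (x + y) 0 = Real.Gamma (x + y) := by simp [wfn]
      have h3 : Real.Gamma (x + y) ≠ 0 := (Real.Gamma_pos_of_pos (by positivity)).ne'
      rw [h0, h1, h2]
      field_simp
  | succ n ih =>
      have key : ((n : ℝ) + 1) * ∑ i ∈ Finset.range (n + 2), wfn x i * wfn y (n + 1 - i) =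
          (x + y + n) * ∑ i ∈ Finset.range (n + 1), wfn x i * wfn y (n - i) := by
        have split : ∑ i ∈ Finset.range (n + 2), ((n : ℝ) + 1) * (wfn x i * wfn y (n + 1 - i)) =
            (∑ i ∈ Finset.range (n + 2), (i : ℝ) * wfn x i * wfn y (n + 1 - i)) +
            (∑ i ∈ Finset.range (n + 2), wfn x i * (((n + 1 - i : ℕ) : ℝ) * wfn y (n + 1 - i))) := by
          rw [← Finset.sum_add_distrib]
          apply Finset.sum_congr rfl
          intro i hi
          have hi' : i ≤ n + 1 := Nat.lt_succ_iff.mp (Finset.mem_range.mp hi)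
          have : ((n + 1 - i : ℕ) : ℝ) = (n : ℝ) + 1 - i := by
            push_cast [Nat.cast_sub hi']; ring
          rw [this]; ring
        have first : ∑ i ∈ Finset.range (n + 2), (i : ℝ) * wfn x i * wfn y (n + 1 - i) =
            ∑ i ∈ Finset.range (n + 1), (x + i) * wfn x i * wfn y (n - i) := by
          rw [Finset.sum_range_succ' (fun i => (i : ℝ) * wfn x i * wfn y (n + 1 - i)) (n + 1)]
          simp
          apply Finset.sum_congr rfl
          intro i hi
          have h2 := wfn_succ hx i
          rw [h2]
        have second : ∑ i ∈ Finset.range (n + 2), wfn x i * (((n + 1 - i : ℕ) : ℝ) * wfn y (n + 1 - i)) =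
            ∑ i ∈ Finset.range (n + 1), wfn x i * ((y + ((n : ℝ) - i)) * wfn y (n - i)) := by
          rw [Finset.sum_range_succ]
          simp only [Nat.sub_self, Nat.cast_zero, zero_mul, mul_zero, add_zero]
          apply Finset.sum_congr rfl
          intro i hi
          have hi' : i ≤ n := Nat.lt_succ_iff.mp (Finset.mem_range.mp hi)
          have h1 : n + 1 - i = (n - i) + 1 := by omega
          rw [h1]
          have h2 := wfn_succ hy (n - i)
          have h3 : ((n - i : ℕ) : ℝ) = (n : ℝ) - i := by push_cast [Nat.cast_sub hi']; ring
          rw [h3] at h2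
          push_cast [Nat.cast_sub hi']
          rw [h2]
        rw [Finset.mul_sum, split, first, second, Finset.mul_sum, ← Finset.sum_add_distrib]
        apply Finset.sum_congr rfl
        intro i hi
        ring
      have hxy : (0 : ℝ) < x + y := by positivity
      have hws := wfn_succ hxy n
      have hn1 : ((n : ℝ) + 1) ≠ 0 := by positivity
      rw [ih] at key
      have goal : ((n : ℝ) + 1) * (∑ i ∈ Finset.range (n + 2), wfn x i * wfn y (n + 1 - i)) =
          ((n : ℝ) + 1) * (Real.Gamma x * Real.Gamma y / Real.Gamma (x + y) * wfn (x + y) (n + 1)) := by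
        rw [key]
        linear_combination -(Real.Gamma x * Real.Gamma y / Real.Gamma (x + y)) * hws
      exact mul_left_cancel₀ hn1 goal

lemma tri (F : ℕ → ℕ → ℝ) (N : ℕ) :
    ∑ i ∈ Finset.range (N + 1), ∑ p ∈ Finset.range (i + 1), F i p =
      ∑ p ∈ Finset.range (N + 1), ∑ d ∈ Finset.range (N + 1 - p), F (p + d) p := by
  induction N with
  | zero => simp
  | succ N ih =>
      rw [Finset.sum_range_succ, ih]
      have h1 : ∑ p ∈ Finset.range (N + 2), ∑ d ∈ Finset.range (N + 2 - p), F (p + d) p =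
          (∑ p ∈ Finset.range (N + 1), ∑ d ∈ Finset.range (N + 2 - p), F (p + d) p) +
            F (N + 1) (N + 1) := by
        rw [Finset.sum_range_succ]
        simp
      rw [h1]
      have h2 : ∀ p ∈ Finset.range (N + 1),
          ∑ d ∈ Finset.range (N + 2 - p), F (p + d) p =
            (∑ d ∈ Finset.range (N + 1 - p), F (p + d) p) + F (N + 1) p := by
        intro p hp
        have hp' : p ≤ N := Nat.lt_succ_iff.mp (Finset.mem_range.mp hp)
        have : N + 2 - p = (N + 1 - p) + 1 := by omega
        rw [this, Finset.sum_range_succ]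
        congr 2
        omega
      rw [Finset.sum_congr rfl h2, Finset.sum_add_distrib,
        Finset.sum_range_succ (fun p => F (N + 1) p) (N + 1)]
      ring

lemma cast_choose_wfn (q i : ℕ) :
    (((q + i).choose q : ℕ) : ℝ) = wfn ((q : ℝ) + 1) i / Real.Gamma ((q : ℝ) + 1) := by
  rw [Nat.cast_choose ℝ (Nat.le_add_right q i)]
  unfold wfn
  rw [Real.Gamma_nat_eq_factorial q]
  have h1 : (q : ℝ) + 1 + i = ((q + i : ℕ) : ℝ) + 1 := by push_cast; ring
  rw [h1, Real.Gamma_nat_eq_factorial (q + i)]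
  have h2 : q + i - q = i := by omega
  rw [h2, div_div]
  ring

lemma gff_wfn (x : ℝ) (d : ℕ) : gff (x + d - 1) (x - 1) = wfn x d := by
  unfold gff wfn
  rw [show x + (d : ℝ) - 1 + 1 = x + d by ring,
    show x + (d : ℝ) - 1 - (x - 1) + 1 = (d : ℝ) + 1 by ring,
    Real.Gamma_nat_eq_factorial]

lemma gff_nat_choose (n k : ℕ) (h : k ≤ n) :
    gff (n : ℝ) (k : ℝ) / (k.factorial : ℝ) = (n.choose k : ℝ) := by
  unfold gff
  rw [Real.Gamma_nat_eq_factorial n]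
  have h1 : (n : ℝ) - k + 1 = ((n - k : ℕ) : ℝ) + 1 := by
    push_cast [Nat.cast_sub h]; ring
  rw [h1, Real.Gamma_nat_eq_factorial (n - k), Nat.cast_choose ℝ h, div_div]
  ring

lemma newton (f : ℝ → ℝ) (y : ℝ) (n : ℕ) :
    f (y + n) = ∑ k ∈ Finset.range (n + 1), (n.choose k : ℝ) * fdiff^[k] f y := by
  have hd : fdiff = fwdDiff (1 : ℝ) := rfl
  have h := shift_eq_sum_fwdDiff_iter (1 : ℝ) f n y
  rw [nsmul_eq_mul, mul_one] at h
  rw [hd, h]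
  apply Finset.sum_congr rfl
  intro k _
  rw [nsmul_eq_mul]

theorem stmt11 (μ ν : ℝ) (hμ : 0 < μ) (hni : ∀ n : ℤ, μ ≠ n) (m : ℕ)
    (hm : m = ⌈μ⌉₊) (hν : ν = m - μ) (f : ℝ → ℝ) (a j : ℕ) (t : ℝ)
    (ht : t = a + m + j) :
    |f t - ∑ k ∈ Finset.range m, gff (t - a) k / (k.factorial : ℝ) * fdiff^[k] f a| ≤
      gff (t - a - ν) μ / Real.Gamma (μ + 1) *
        (Finset.range (j + 1)).sup' Finset.nonempty_range_add_one
          (fun i => |caputo μ a f (a + ν + i)|) := by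
  -- basic positivity facts
  have h2 : μ ≠ (m : ℝ) := fun h => hni (m : ℤ) (by exact_mod_cast h)
  have hμm : μ < (m : ℝ) := lt_of_le_of_ne (by rw [hm]; exact Nat.le_ceil μ) h2
  have hνpos : 0 < ν := by rw [hν]; linarith
  have hμν : ν + μ = (m : ℝ) := by rw [hν]; ring
  have hΓμ : 0 < Real.Gamma μ := Real.Gamma_pos_of_pos hμ
  have hΓν : 0 < Real.Gamma ν := Real.Gamma_pos_of_pos hνpos
  have hmpos : (0 : ℝ) < (m : ℝ) := lt_trans hμ hμm
  -- Step A : value of the Caputo difference at integer-shifted points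
  have hcap : ∀ i : ℕ, caputo μ a f (↑a + ν + ↑i) =
      (1 / Real.Gamma ν) * ∑ p ∈ Finset.range (i + 1),
        wfn ν (i - p) * fdiff^[m] f (↑a + ↑p) := by
    intro i
    unfold caputo fsum
    rw [← hm, ← hν]
    have harg : (↑a + ν + ↑i) - ν - ↑a = (i : ℝ) := by ring
    rw [harg, Int.floor_natCast, Int.toNat_natCast]
    congr 1
    apply Finset.sum_congr rfl
    intro p hp
    have hp' : p ≤ i := Nat.lt_succ_iff.mp (Finset.mem_range.mp hp)
    have harg2 : (↑a + ν + ↑i) - (↑a + ↑p) - 1 = ν + ((i - p : ℕ) : ℝ) - 1 := by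
      push_cast [Nat.cast_sub hp']; ring
    rw [harg2, gff_wfn ν (i - p)]
  -- Step B : the main identity
  have habs : f t - ∑ k ∈ Finset.range m, gff (t - ↑a) ↑k / (k.factorial : ℝ) * fdiff^[k] f ↑a
      = (1 / Real.Gamma μ) * ∑ i ∈ Finset.range (j + 1),
          wfn μ (j - i) * caputo μ a f (↑a + ν + ↑i) := by
    -- expand caputo and swap the double sum
    have e1 : ∑ i ∈ Finset.range (j + 1), wfn μ (j - i) * caputo μ a f (↑a + ν + ↑i)
        = ∑ i ∈ Finset.range (j + 1), ∑ p ∈ Finset.range (i + 1),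
            (1 / Real.Gamma ν) * (wfn μ (j - i) * wfn ν (i - p) * fdiff^[m] f (↑a + ↑p)) := by
      apply Finset.sum_congr rfl
      intro i _
      rw [hcap i, Finset.mul_sum, Finset.mul_sum]
      exact Finset.sum_congr rfl fun p _ => by ring
    have e2 : ∑ i ∈ Finset.range (j + 1), ∑ p ∈ Finset.range (i + 1),
            (1 / Real.Gamma ν) * (wfn μ (j - i) * wfn ν (i - p) * fdiff^[m] f (↑a + ↑p))
        = ∑ p ∈ Finset.range (j + 1), ∑ d ∈ Finset.range (j + 1 - p),
            (1 / Real.Gamma ν) * (wfn μ (j - (p + d)) * wfn ν (p + d - p) * fdiff^[m] f (↑a + ↑p)) :=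
      tri _ j
    -- inner Vandermonde, giving the `Δ^{-m} Δ^m` form
    have e3 : ∀ p ∈ Finset.range (j + 1),
        ∑ d ∈ Finset.range (j + 1 - p),
            (1 / Real.Gamma ν) * (wfn μ (j - (p + d)) * wfn ν (p + d - p) * fdiff^[m] f (↑a + ↑p))
        = Real.Gamma μ * (wfn (m : ℝ) (j - p) / Real.Gamma (m : ℝ)) * fdiff^[m] f (↑a + ↑p) := by
      intro p hp
      have hp' : p ≤ j := Nat.lt_succ_iff.mp (Finset.mem_range.mp hp)
      have hr : j + 1 - p = (j - p) + 1 := by omega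
      have hterm : ∀ d ∈ Finset.range ((j - p) + 1),
          (1 / Real.Gamma ν) * (wfn μ (j - (p + d)) * wfn ν (p + d - p) * fdiff^[m] f (↑a + ↑p))
          = ((1 / Real.Gamma ν) * fdiff^[m] f (↑a + ↑p)) * (wfn ν d * wfn μ ((j - p) - d)) := by
        intro d hd
        have h1 : j - (p + d) = (j - p) - d := by omega
        have h2 : p + d - p = d := by omega
        rw [h1, h2]; ring
      rw [hr, Finset.sum_congr rfl hterm, ← Finset.mul_sum, vdm hνpos hμ (j - p), ← hμν]
      have hΓνμ : Real.Gamma (ν + μ) ≠ 0 := (Real.Gamma_pos_of_pos (by linarith)).ne'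
      field_simp
    -- Newton expansion of `Δ^m f (a+p)`
    have e4 : ∀ p : ℕ, fdiff^[m] f (↑a + ↑p)
        = ∑ q ∈ Finset.range (p + 1), (p.choose q : ℝ) * fdiff^[q + m] f ↑a := by
      intro p
      rw [newton (fdiff^[m] f) (↑a) p]
      apply Finset.sum_congr rfl
      intro q _
      rw [Function.iterate_add_apply]
    -- the double sum after Newton, swapped and Vandermonded again
    have e5 : ∑ p ∈ Finset.range (j + 1), wfn (m : ℝ) (j - p) / Real.Gamma (m : ℝ) * fdiff^[m] f (↑a + ↑p)
        = ∑ q ∈ Finset.range (j + 1), ((m + j).choose (q + m) : ℝ) * fdiff^[q + m] f ↑a := by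
      have ea : ∑ p ∈ Finset.range (j + 1), wfn (m : ℝ) (j - p) / Real.Gamma (m : ℝ) * fdiff^[m] f (↑a + ↑p)
          = ∑ p ∈ Finset.range (j + 1), ∑ q ∈ Finset.range (p + 1),
              wfn (m : ℝ) (j - p) / Real.Gamma (m : ℝ) * ((p.choose q : ℝ) * fdiff^[q + m] f ↑a) := by
        apply Finset.sum_congr rfl
        intro p _
        rw [e4 p, Finset.mul_sum]
      rw [ea, tri _ j]
      apply Finset.sum_congr rfl
      intro q hq
      have hq' : q ≤ j := Nat.lt_succ_iff.mp (Finset.mem_range.mp hq)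
      have hr : j + 1 - q = (j - q) + 1 := by omega
      have hterm : ∀ d ∈ Finset.range ((j - q) + 1),
          wfn (m : ℝ) (j - (q + d)) / Real.Gamma (m : ℝ) * (((q + d).choose q : ℝ) * fdiff^[q + m] f ↑a)
          = (fdiff^[q + m] f ↑a / (Real.Gamma (m : ℝ) * Real.Gamma ((q : ℝ) + 1)))
              * (wfn ((q : ℝ) + 1) d * wfn (m : ℝ) ((j - q) - d)) := by
        intro d hd
        have h1 : j - (q + d) = (j - q) - d := by omega
        rw [h1, cast_choose_wfn q d]
        ring
      rw [hr, Finset.sum_congr rfl hterm, ← Finset.mul_sum, vdm (by positivity : (0:ℝ) < (q:ℝ) + 1) hmpos (j - q)]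
      have hch : (((m + j).choose (q + m)) : ℝ) = wfn ((q : ℝ) + 1 + (m : ℝ)) (j - q) / Real.Gamma ((q : ℝ) + 1 + (m : ℝ)) := by
        have h3 : ((q + m) + (j - q)) = m + j := by omega
        have h4 : ((q + m : ℕ) : ℝ) + 1 = (q : ℝ) + 1 + (m : ℝ) := by push_cast; ring
        rw [← h3, cast_choose_wfn (q + m) (j - q), h4]
      rw [hch]
      have hq1 : (0 : ℝ) < Real.Gamma ((q : ℝ) + 1) := Real.Gamma_pos_of_pos (by positivity)
      have hqm : (0 : ℝ) < Real.Gamma ((q : ℝ) + 1 + (m : ℝ)) := Real.Gamma_pos_of_pos (by positivity)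
      field_simp
    -- Gregory–Newton for f itself and splitting of the range
    have e6 : f t = ∑ k ∈ Finset.range (m + j + 1), ((m + j).choose k : ℝ) * fdiff^[k] f ↑a := by
      have harg : t = ↑a + ((m + j : ℕ) : ℝ) := by rw [ht]; push_cast; ring
      rw [harg, newton f (↑a) (m + j)]
    have e7 : ∑ k ∈ Finset.range m, gff (t - ↑a) ↑k / (k.factorial : ℝ) * fdiff^[k] f ↑a
        = ∑ k ∈ Finset.range m, ((m + j).choose k : ℝ) * fdiff^[k] f ↑a := by
      apply Finset.sum_congr rfl
      intro k hk
      have hk' : k ≤ m + j := by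
        have := Finset.mem_range.mp hk; omega
      have harg : t - ↑a = ((m + j : ℕ) : ℝ) := by rw [ht]; push_cast; ring
      rw [harg, gff_nat_choose (m + j) k hk']
    have e8 : ∑ k ∈ Finset.range (m + j + 1), ((m + j).choose k : ℝ) * fdiff^[k] f ↑a
        = (∑ k ∈ Finset.range m, ((m + j).choose k : ℝ) * fdiff^[k] f ↑a)
          + ∑ q ∈ Finset.range (j + 1), ((m + j).choose (q + m) : ℝ) * fdiff^[q + m] f ↑a := by
      rw [← Finset.sum_range_add_sum_Ico _ (by omega : m ≤ m + j + 1)]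
      congr 1
      rw [Finset.sum_Ico_eq_sum_range]
      have hr : m + j + 1 - m = j + 1 := by omega
      rw [hr]
      apply Finset.sum_congr rfl
      intro q _
      rw [Nat.add_comm m q]
    rw [e1, e2, Finset.sum_congr rfl e3, e6, e7, e8]
    have e9 : 1 / Real.Gamma μ * ∑ x ∈ Finset.range (j + 1),
          Real.Gamma μ * (wfn (↑m) (j - x) / Real.Gamma ↑m) * fdiff^[m] f (↑a + ↑x)
        = ∑ x ∈ Finset.range (j + 1), wfn (↑m) (j - x) / Real.Gamma ↑m * fdiff^[m] f (↑a + ↑x) := by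
      rw [Finset.mul_sum]
      apply Finset.sum_congr rfl
      intro x _
      have : Real.Gamma μ ≠ 0 := hΓμ.ne'
      field_simp
    rw [e9, e5]
    ring
  -- Step D : the estimate
  generalize hcgen : caputo μ (↑a : ℝ) f = c at habs ⊢
  set M := (Finset.range (j + 1)).sup' Finset.nonempty_range_add_one
      (fun i => |c (↑a + ν + ↑i)|) with hMdef
  have key : |∑ i ∈ Finset.range (j + 1), wfn μ (j - i) * c (↑a + ν + ↑i)|
      ≤ ∑ i ∈ Finset.range (j + 1), wfn μ (j - i) * M := by
    refine (Finset.abs_sum_le_sum_abs _ _).trans (Finset.sum_le_sum fun i hi => ?_)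
    rw [abs_mul, abs_of_pos (wfn_pos hμ _)]
    exact mul_le_mul_of_nonneg_left
      (Finset.le_sup' (fun i => |c (↑a + ν + ↑i)|) hi) (wfn_pos hμ _).le
  have hrefl : ∑ i ∈ Finset.range (j + 1), wfn μ (j - i)
      = ∑ i ∈ Finset.range (j + 1), wfn μ i := by
    rw [← Finset.sum_range_reflect]
    apply Finset.sum_congr rfl
    intro i hi
    have hi' : i ≤ j := Nat.lt_succ_iff.mp (Finset.mem_range.mp hi)
    congr 1
    omega
  have hhs : ∑ i ∈ Finset.range (j + 1), wfn μ i
      = Real.Gamma μ / Real.Gamma (μ + 1) * wfn (μ + 1) j := by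
    have hv := vdm hμ one_pos j
    simp only [wfn_one, mul_one, Real.Gamma_one] at hv
    exact hv
  have hco : gff (t - ↑a - ν) μ = wfn (μ + 1) j := by
    have harg : t - ↑a - ν = μ + 1 + (j : ℝ) - 1 := by rw [ht, hν]; push_cast; ring
    rw [harg]
    convert gff_wfn (μ + 1) j using 2
    ring
  have hΓμ1 : 0 < Real.Gamma (μ + 1) := Real.Gamma_pos_of_pos (by linarith)
  rw [habs, hco]
  calc |1 / Real.Gamma μ * ∑ i ∈ Finset.range (j + 1),
          wfn μ (j - i) * c (↑a + ν + ↑i)|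
      = 1 / Real.Gamma μ * |∑ i ∈ Finset.range (j + 1),
          wfn μ (j - i) * c (↑a + ν + ↑i)| := by
        rw [abs_mul, abs_of_pos (by positivity : (0:ℝ) < 1 / Real.Gamma μ)]
    _ ≤ 1 / Real.Gamma μ * ∑ i ∈ Finset.range (j + 1), wfn μ (j - i) * M :=
        mul_le_mul_of_nonneg_left key (by positivity)
    _ = wfn (μ + 1) j / Real.Gamma (μ + 1) * M := by
        rw [← Finset.sum_mul, hrefl, hhs]
        have h1 : Real.Gamma μ ≠ 0 := hΓμ.ne'
        have h2 : Real.Gamma (μ + 1) ≠ 0 := hΓμ1.ne'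
        field_simp
end

section
/- Let μ > p, p ∈ ℕ, μ non-integer, m = ⌈μ⌉, ν = m - μ, t ∈ ℕ_{a+m-p}, f defined on ℕ_a, a ∈ ℤ⁺. Then |Δ^p f(t) - ∑_{k=p}^{m-1} ((t-a)^(k-p)/(k-p)!)·Δ^k f(a)| ≤ ((t-a-ν)^(μ-p)/Γ(μ-p+1))·max_{s ∈ {a+ν, ..., t-μ+p}} |Δ_*^μ f(s)|. -/
open Finset

/-- Generalized binomial coefficient `C(α-1+n, n) = (α)(α+1)⋯(α+n-1)/n!`. -/
noncomputable def Cgen (α : ℝ) (n : ℕ) : ℝ := (∏ i ∈ Finset.range n, (α + i)) / n.factorial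

lemma Cgen_zero (α : ℝ) : Cgen α 0 = 1 := by simp [Cgen]

lemma Cgen_succ (α : ℝ) (n : ℕ) : ((n : ℝ) + 1) * Cgen α (n + 1) = (α + n) * Cgen α n := by
  unfold Cgen
  rw [Finset.prod_range_succ, Nat.factorial_succ]
  push_cast
  field_simp

lemma Cgen_pos {α : ℝ} (hα : 0 < α) (n : ℕ) : 0 < Cgen α n := by
  apply div_pos
  · exact Finset.prod_pos fun i _ => by positivity
  · positivity

lemma Cgen_one (n : ℕ) : Cgen 1 n = 1 := by
  induction n with
  | zero => simp [Cgen]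
  | succ k ih =>
    have h := Cgen_succ 1 k
    rw [ih, mul_one, add_comm] at h
    have : ((k : ℝ) + 1) ≠ 0 := by positivity
    field_simp at h
    linarith [h]

lemma Cgen_vandermonde (α β : ℝ) : ∀ n : ℕ,
    ∑ u ∈ Finset.range (n + 1), Cgen α u * Cgen β (n - u) = Cgen (α + β) n := by
  intro n
  induction n with
  | zero => simp [Cgen_zero]
  | succ n ih =>
    have key : ((n : ℝ) + 1) * ∑ u ∈ Finset.range (n + 2), Cgen α u * Cgen β (n + 1 - u)
        = (α + β + n) * ∑ u ∈ Finset.range (n + 1), Cgen α u * Cgen β (n - u) := by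
      rw [Finset.mul_sum, Finset.mul_sum]
      have split : ∀ u ∈ Finset.range (n + 2),
          ((n : ℝ) + 1) * (Cgen α u * Cgen β (n + 1 - u)) =
            (u : ℝ) * Cgen α u * Cgen β (n + 1 - u)
            + Cgen α u * (((n + 1 - u : ℕ) : ℝ) * Cgen β (n + 1 - u)) := by
        intro u hu
        rw [Finset.mem_range] at hu
        have : ((n + 1 - u : ℕ) : ℝ) = (n : ℝ) + 1 - u := by
          have : u ≤ n + 1 := by omega
          push_cast [this]; ring
        rw [this]; ring
      rw [Finset.sum_congr rfl split, Finset.sum_add_distrib]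
      have e1 : ∑ u ∈ Finset.range (n + 2), (u : ℝ) * Cgen α u * Cgen β (n + 1 - u)
          = ∑ v ∈ Finset.range (n + 1), (α + v) * Cgen α v * Cgen β (n - v) := by
        rw [Finset.sum_range_succ' (fun u => (u : ℝ) * Cgen α u * Cgen β (n + 1 - u)) (n + 1)]
        simp only [Nat.cast_zero, zero_mul, add_zero]
        apply Finset.sum_congr rfl
        intro v hv
        have h1 : ((v : ℝ) + 1) * Cgen α (v + 1) = (α + v) * Cgen α v := Cgen_succ α v
        have h2 : n + 1 - (v + 1) = n - v := by omega
        rw [h2]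
        push_cast
        exact congrArg (· * Cgen β (n - v)) h1
      have e2 : ∑ u ∈ Finset.range (n + 2), Cgen α u * (((n + 1 - u : ℕ) : ℝ) * Cgen β (n + 1 - u))
          = ∑ u ∈ Finset.range (n + 1), Cgen α u * ((β + (n - u : ℕ)) * Cgen β (n - u)) := by
        rw [Finset.sum_range_succ]
        simp only [Nat.sub_self, Nat.cast_zero, zero_mul, mul_zero, add_zero]
        apply Finset.sum_congr rfl
        intro u hu
        rw [Finset.mem_range] at hu
        have h2 : n + 1 - u = (n - u) + 1 := by omega
        rw [h2]
        have h1 : (((n - u : ℕ) : ℝ) + 1) * Cgen β ((n - u) + 1) = (β + (n - u : ℕ)) * Cgen β (n - u) :=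
          Cgen_succ β (n - u)
        push_cast
        push_cast at h1
        rw [h1]
      rw [e1, e2, ← Finset.sum_add_distrib]
      apply Finset.sum_congr rfl
      intro u hu
      rw [Finset.mem_range] at hu
      have hc : ((n - u : ℕ) : ℝ) = (n : ℝ) - u := by
        have : u ≤ n := by omega
        push_cast [this]; ring
      rw [hc]; ring
    rw [ih] at key
    have h1 : ((n : ℝ) + 1) * Cgen (α + β) (n + 1) = (α + β + n) * Cgen (α + β) n := Cgen_succ (α + β) n
    have hne : ((n : ℝ) + 1) ≠ 0 := by positivity
    have := key.trans h1.symm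
    exact mul_left_cancel₀ hne this

lemma Cgen_nat (q n : ℕ) : Cgen ((q : ℝ) + 1) n = ((q + n).choose n : ℝ) := by
  induction n with
  | zero => simp [Cgen_zero]
  | succ n ih =>
    have h1 := Cgen_succ ((q : ℝ) + 1) n
    rw [ih] at h1
    have h2 : (q + n + 1).choose (n + 1) * (n + 1) = (q + n + 1) * (q + n).choose n :=
      (Nat.add_one_mul_choose_eq (q + n) n).symm
    have h2' : ((q + n + 1).choose (n + 1) : ℝ) * ((n : ℝ) + 1)
        = ((q : ℝ) + n + 1) * ((q + n).choose n : ℝ) := by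
      exact_mod_cast congrArg (fun x : ℕ => (x : ℝ)) h2
    have hne : ((n : ℝ) + 1) ≠ 0 := by positivity
    have : ((q + n + 1).choose (n + 1) : ℝ) = Cgen ((q : ℝ) + 1) (n + 1) := by
      apply mul_left_cancel₀ hne
      rw [mul_comm ((n:ℝ)+1), h2', h1]; ring
    rw [← this]
    norm_num [Nat.add_assoc]

lemma Gamma_add_nat {α : ℝ} (hα : 0 < α) (n : ℕ) :
    Real.Gamma (α + n) = Real.Gamma α * ∏ i ∈ Finset.range n, (α + i) := by
  induction n with
  | zero => simp
  | succ n ih =>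
    have hne : α + n ≠ 0 := by positivity
    have : α + (n + 1 : ℕ) = (α + n) + 1 := by push_cast; ring
    rw [this, Real.Gamma_add_one hne, ih, Finset.prod_range_succ]
    ring

lemma gff_eq_Cgen {α : ℝ} (hα : 0 < α) (n : ℕ) :
    gff (α - 1 + n) (α - 1) = Real.Gamma α * Cgen α n := by
  unfold gff Cgen
  have h1 : α - 1 + n + 1 = α + n := by ring
  have h2 : α - 1 + n - (α - 1) + 1 = (n : ℝ) + 1 := by ring
  rw [h1, h2, Real.Gamma_nat_eq_factorial, Gamma_add_nat hα, mul_div_assoc]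

lemma gff_nat {N r : ℕ} (h : r ≤ N) :
    gff (N : ℝ) (r : ℝ) / (r.factorial : ℝ) = (N.choose r : ℝ) := by
  unfold gff
  have h1 : (N : ℝ) - r + 1 = ((N - r : ℕ) : ℝ) + 1 := by push_cast [h]; ring
  rw [h1, Real.Gamma_nat_eq_factorial, Real.Gamma_nat_eq_factorial, Nat.cast_choose ℝ h,
    div_div]
  rw [mul_comm ((r.factorial : ℝ))]

/-- Forward difference on sequences. -/
def fdiffN (h : ℕ → ℝ) : ℕ → ℝ := fun n => h (n + 1) - h n

lemma fdiffN_telescope (g : ℕ → ℝ) (s : ℕ) :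
    g s = g 0 + ∑ u ∈ Finset.range s, fdiffN g u := by
  simp only [fdiffN]
  rw [Finset.sum_range_sub g]
  ring


lemma fdiff_iterate (x : ℝ) : ∀ (k : ℕ) (f : ℝ → ℝ) (n : ℕ),
    fdiff^[k] f (x + n) = fdiffN^[k] (fun i : ℕ => f (x + i)) n := by
  intro k
  induction k with
  | zero => intro f n; simp
  | succ k ih =>
    intro f n
    have hfun : (fun i : ℕ => fdiff f (x + i)) = fdiffN (fun i : ℕ => f (x + i)) := by
      funext i
      simp only [fdiff, fdiffN]
      push_cast
      rw [add_assoc]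
    rw [Function.iterate_succ_apply fdiff k f, ih (fdiff f) n, hfun,
      ← Function.iterate_succ_apply fdiffN k]

/-- Hockey stick. -/
lemma hockey_s12 (q n : ℕ) : ∑ w ∈ Finset.range n, (q + w).choose q = (q + n).choose (q + 1) := by
  induction n with
  | zero => simp [Nat.choose_eq_zero_of_lt]
  | succ n ih =>
    rw [Finset.sum_range_succ, ih]
    have e : q + (n + 1) = (q + n) + 1 := by omega
    rw [e, Nat.choose_succ_succ (q + n) q]
    simp only [Nat.succ_eq_add_one]
    omega

lemma hockey' (q n : ℕ) : ∑ w ∈ Finset.range n, (q + w).choose w = (q + n).choose (q + 1) := by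
  rw [← hockey_s12 q n]
  exact Finset.sum_congr rfl fun w _ => Nat.choose_symm_add.symm

/-- Discrete Taylor formula with integer-order remainder. -/
lemma discrete_taylor (q : ℕ) : ∀ (h : ℕ → ℝ) (j : ℕ),
    h (q + 1 + j) = (∑ r ∈ Finset.range (q + 1), ((q + 1 + j).choose r : ℝ) * fdiffN^[r] h 0)
      + ∑ s ∈ Finset.range (j + 1), ((q + (j - s)).choose (j - s) : ℝ) * fdiffN^[q + 1] h s := by
  induction q with
  | zero =>
    intro h j
    simp only [Nat.zero_add, Nat.choose_self, Nat.cast_one, one_mul, Function.iterate_one,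
      Finset.range_one, Finset.sum_singleton, Nat.choose_zero_right, Function.iterate_zero,
      id_eq, fdiffN]
    have e : 1 + j = j + 1 := by omega
    rw [e, Finset.sum_range_sub h]
    ring
  | succ q ih =>
    intro h j
    rw [(by omega : q + 1 + 1 = q + 2)]
    have step : h (q + 2 + j)
        = (∑ r ∈ Finset.range (q + 1), ((q + 2 + j).choose r : ℝ) * fdiffN^[r] h 0)
          + ∑ s ∈ Finset.range (j + 2), ((q + (j + 1 - s)).choose (j + 1 - s) : ℝ)
              * fdiffN^[q + 1] h s := by
      have := ih h (j + 1)
      have e : q + 1 + (j + 1) = q + 2 + j := by omega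
      rw [e] at this
      convert this using 3 <;> omega
    have expand : ∀ s : ℕ, fdiffN^[q + 1] h s
        = fdiffN^[q + 1] h 0 + ∑ u ∈ Finset.range s, fdiffN^[q + 2] h u := by
      intro s
      have h2 : ∀ u, fdiffN^[q + 2] h u = fdiffN (fdiffN^[q + 1] h) u := by
        intro u
        rw [show q + 2 = (q + 1) + 1 by omega, Function.iterate_succ_apply' fdiffN (q + 1) h]
      rw [Finset.sum_congr rfl fun u _ => h2 u]
      exact fdiffN_telescope (fdiffN^[q + 1] h) s
    -- coefficient sum (hockey stick)
    have coefsum : ∑ s ∈ Finset.range (j + 2), ((q + (j + 1 - s)).choose (j + 1 - s)) 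
        = (q + 2 + j).choose (q + 1) := by
      have e1 : ∑ s ∈ Finset.range (j + 2), (q + (j + 1 - s)).choose (j + 1 - s)
          = ∑ s ∈ Finset.range (j + 2), (q + s).choose s := by
        rw [← Finset.sum_range_reflect (fun w => (q + w).choose w) (j + 2)]
        apply Finset.sum_congr rfl
        intro s hs
        rw [Finset.mem_range] at hs
        show (q + (j + 1 - s)).choose (j + 1 - s) = (q + (j + 2 - 1 - s)).choose (j + 2 - 1 - s)
        congr 1 <;> omega
      rw [e1, hockey' q (j + 2)]
      congr 1
      omega
    -- inner Ico coefficient sums (hockey stick)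
    have inner : ∀ u, u ≤ j →
        (∑ x ∈ Finset.Ico (u + 1) (j + 2), (q + (j + 1 - x)).choose (j + 1 - x))
          = (q + 1 + (j - u)).choose (j - u) := by
      intro u hu
      rw [Finset.sum_Ico_eq_sum_range]
      rw [(by omega : j + 2 - (u + 1) = j + 1 - u)]
      have e1 : ∑ i ∈ Finset.range (j + 1 - u), (q + (j + 1 - (u + 1 + i))).choose (j + 1 - (u + 1 + i))
          = ∑ i ∈ Finset.range (j + 1 - u), (q + i).choose i := by
        rw [← Finset.sum_range_reflect (fun w => (q + w).choose w) (j + 1 - u)]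
        apply Finset.sum_congr rfl
        intro i hi
        rw [Finset.mem_range] at hi
        show (q + (j + 1 - (u + 1 + i))).choose (j + 1 - (u + 1 + i))
            = (q + (j + 1 - u - 1 - i)).choose (j + 1 - u - 1 - i)
        congr 1 <;> omega
      rw [e1, hockey' q (j + 1 - u), (by omega : q + (j + 1 - u) = (q + 1) + (j - u)),
        Nat.choose_symm_add]
    -- the swap
    have sum2 : ∑ s ∈ Finset.range (j + 2), ((q + (j + 1 - s)).choose (j + 1 - s) : ℝ)
          * fdiffN^[q + 1] h s
        = ((q + 2 + j).choose (q + 1) : ℝ) * fdiffN^[q + 1] h 0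
          + ∑ u ∈ Finset.range (j + 1), ((q + 1 + (j - u)).choose (j - u) : ℝ)
              * fdiffN^[q + 2] h u := by
      have e1 : ∀ s ∈ Finset.range (j + 2),
          ((q + (j + 1 - s)).choose (j + 1 - s) : ℝ) * fdiffN^[q + 1] h s
          = ((q + (j + 1 - s)).choose (j + 1 - s) : ℝ) * fdiffN^[q + 1] h 0
            + ∑ u ∈ Finset.range s, ((q + (j + 1 - s)).choose (j + 1 - s) : ℝ) * fdiffN^[q + 2] h u := by
        intro s _
        rw [expand s, mul_add, Finset.mul_sum]
      rw [Finset.sum_congr rfl e1, Finset.sum_add_distrib]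
      congr 1
      · rw [← Finset.sum_mul, ← Nat.cast_sum, coefsum]
      · simp only [Finset.range_eq_Ico]
        rw [← Finset.sum_Ico_Ico_comm' 0 (j + 2)
          (fun u x => ((q + (j + 1 - x)).choose (j + 1 - x) : ℝ) * fdiffN^[q + 2] h u)]
        rw [Finset.sum_Ico_succ_top (by omega : 0 ≤ j + 1)]
        rw [Finset.Ico_self, Finset.sum_empty, add_zero]
        apply Finset.sum_congr rfl
        intro u hu
        rw [Finset.mem_Ico] at hu
        rw [← Finset.sum_mul, ← Nat.cast_sum, inner u (by omega)]
    rw [step, sum2, show q + 2 = q + 1 + 1 from rfl,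
      Finset.sum_range_succ (fun r => ((q + 1 + 1 + j).choose r : ℝ) * fdiffN^[r] h 0) (q + 1)]
    exact (add_assoc _ _ _).symm

theorem stmt12 (μ ν : ℝ) (p : ℕ) (hμ : (p : ℝ) < μ) (hni : ∀ n : ℤ, μ ≠ n)
    (m : ℕ) (hm : m = ⌈μ⌉₊) (hν : ν = m - μ) (f : ℝ → ℝ) (a j : ℕ) (t : ℝ)
    (ht : t = a + m - p + j) :
    |fdiff^[p] f t -
        ∑ k ∈ Finset.Ico p m,
          gff (t - a) ((k : ℝ) - p) / ((k - p).factorial : ℝ) * fdiff^[k] f a| ≤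
      gff (t - a - ν) (μ - p) / Real.Gamma (μ - p + 1) *
        (Finset.range (j + 1)).sup' Finset.nonempty_range_add_one
          (fun i => |caputo μ a f (a + ν + i)|) := by
  -- basic numeric facts
  have hμ0 : 0 < μ := lt_of_le_of_lt (Nat.cast_nonneg p) hμ
  have hμm : μ ≤ (m : ℝ) := by rw [hm]; exact Nat.le_ceil μ
  have hne : μ ≠ (m : ℝ) := by have := hni (m : ℤ); push_cast at this; exact this
  have hμm' : μ < (m : ℝ) := lt_of_le_of_ne hμm hne
  have hpm : p < m := by exact_mod_cast hμ.trans hμm'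
  have hm1 : (m : ℝ) - 1 < μ := by
    have h1 : 1 ≤ m := by omega
    have h2 : (m - 1 : ℕ) < ⌈μ⌉₊ := by omega
    have h3 := (Nat.lt_ceil).1 h2
    have h4 : ((m - 1 : ℕ) : ℝ) = (m : ℝ) - 1 := by push_cast [h1]; ring
    linarith [h4 ▸ h3]
  have hν0 : 0 < ν := by rw [hν]; linarith
  have hν1 : ν < 1 := by rw [hν]; linarith
  obtain ⟨q, hq⟩ : ∃ q, m = p + (q + 1) := ⟨m - p - 1, by omega⟩
  set h : ℕ → ℝ := fun n : ℕ => f ((a : ℝ) + n) with hh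
  have bridge : ∀ k n : ℕ, fdiff^[k] f ((a : ℝ) + n) = fdiffN^[k] h n := by
    intro k n
    rw [hh]
    exact fdiff_iterate (a : ℝ) k f n
  have bridge0 : ∀ k : ℕ, fdiff^[k] f (a : ℝ) = fdiffN^[k] h 0 := by
    intro k
    have := bridge k 0
    simpa using this
  have hGammaν : Real.Gamma ν ≠ 0 := (Real.Gamma_pos_of_pos hν0).ne'
  -- Step A : caputo values as convolutions
  have stepA : ∀ i : ℕ, caputo μ (a : ℝ) f ((a : ℝ) + ν + i)
      = ∑ s ∈ Finset.range (i + 1), Cgen ν (i - s) * fdiffN^[m] h s := by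
    intro i
    unfold caputo fsum
    rw [← hm, ← hν]
    have hfl : (⌊(a : ℝ) + ν + i - ν - a⌋).toNat = i := by
      rw [show (a : ℝ) + ν + i - ν - a = ((i : ℕ) : ℝ) by push_cast; ring,
        Int.floor_natCast, Int.toNat_natCast]
    rw [hfl, Finset.mul_sum]
    apply Finset.sum_congr rfl
    intro s hs
    rw [Finset.mem_range] at hs
    have harg : (a : ℝ) + ν + i - ((a : ℝ) + s) - 1 = ν - 1 + ((i - s : ℕ) : ℝ) := by
      have hs' : s ≤ i := by omega
      push_cast [hs']
      ring
    rw [harg, gff_eq_Cgen hν0 (i - s), bridge m s]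
    field_simp
  -- Step B : the LHS equals the integer-order remainder
  have htn : t = (a : ℝ) + ((q + 1 + j : ℕ) : ℝ) := by
    rw [ht]
    push_cast [hq]
    ring
  have hta : t - (a : ℝ) = ((q + 1 + j : ℕ) : ℝ) := by rw [htn]; ring
  have stepB : fdiff^[p] f t -
        ∑ k ∈ Finset.Ico p m,
          gff (t - a) ((k : ℝ) - p) / ((k - p).factorial : ℝ) * fdiff^[k] f a
      = ∑ s ∈ Finset.range (j + 1), Cgen ((q : ℝ) + 1) (j - s) * fdiffN^[m] h s := by
    have hL : fdiff^[p] f t = fdiffN^[p] h (q + 1 + j) := by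
      rw [htn, bridge p (q + 1 + j)]
    have hT := discrete_taylor q (fdiffN^[p] h) j
    have hsum : ∑ k ∈ Finset.Ico p m,
          gff (t - a) ((k : ℝ) - p) / ((k - p).factorial : ℝ) * fdiff^[k] f a
        = ∑ r ∈ Finset.range (q + 1), ((q + 1 + j).choose r : ℝ)
            * fdiffN^[r] (fdiffN^[p] h) 0 := by
      rw [Finset.sum_Ico_eq_sum_range, (show m - p = q + 1 by omega)]
      apply Finset.sum_congr rfl
      intro r hr
      rw [Finset.mem_range] at hr
      rw [hta, (show ((p + r : ℕ) : ℝ) - (p : ℝ) = ((r : ℕ) : ℝ) by push_cast; ring),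
        (show p + r - p = r by omega), gff_nat (show r ≤ q + 1 + j by omega),
        bridge0 (p + r), (show p + r = r + p by omega), Function.iterate_add_apply]
    have hrem : ∀ s ∈ Finset.range (j + 1),
        ((q + (j - s)).choose (j - s) : ℝ) * fdiffN^[q + 1] (fdiffN^[p] h) s
          = Cgen ((q : ℝ) + 1) (j - s) * fdiffN^[m] h s := by
      intro s _
      rw [Cgen_nat q (j - s), ← Function.iterate_add_apply fdiffN (q + 1) p h,
        (show q + 1 + p = m by omega)]
    rw [hL, hT, hsum, add_sub_cancel_left]
    exact Finset.sum_congr rfl hrem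
  -- Step C : fractional convolution composition via Vandermonde
  have hνα : ν + (μ - (p : ℝ)) = (q : ℝ) + 1 := by
    rw [hν]
    push_cast [hq]
    ring
  have stepC : ∑ i ∈ Finset.range (j + 1),
        Cgen (μ - (p : ℝ)) (j - i) * caputo μ (a : ℝ) f ((a : ℝ) + ν + i)
      = ∑ s ∈ Finset.range (j + 1), Cgen ((q : ℝ) + 1) (j - s) * fdiffN^[m] h s := by
    have e1 : ∀ i ∈ Finset.range (j + 1),
        Cgen (μ - (p : ℝ)) (j - i) * caputo μ (a : ℝ) f ((a : ℝ) + ν + i)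
          = ∑ s ∈ Finset.range (i + 1),
              Cgen (μ - (p : ℝ)) (j - i) * (Cgen ν (i - s) * fdiffN^[m] h s) := by
      intro i _
      rw [stepA i, Finset.mul_sum]
    rw [Finset.sum_congr rfl e1]
    simp only [Finset.range_eq_Ico]
    rw [← Finset.sum_Ico_Ico_comm 0 (j + 1)
      (fun s i => Cgen (μ - (p : ℝ)) (j - i) * (Cgen ν (i - s) * fdiffN^[m] h s))]
    apply Finset.sum_congr rfl
    intro s hs
    rw [Finset.mem_Ico] at hs
    have e2 : ∀ u ∈ Finset.range ((j - s) + 1),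
        Cgen (μ - (p : ℝ)) (j - (s + u)) * (Cgen ν (s + u - s) * fdiffN^[m] h s)
          = Cgen ν u * Cgen (μ - (p : ℝ)) ((j - s) - u) * fdiffN^[m] h s := by
      intro u _
      rw [Nat.add_sub_cancel_left, (show j - (s + u) = (j - s) - u by omega)]
      ring
    rw [Finset.sum_Ico_eq_sum_range, (show j + 1 - s = (j - s) + 1 by omega),
      Finset.sum_congr rfl e2, ← Finset.sum_mul, Cgen_vandermonde ν (μ - (p : ℝ)) (j - s), hνα]
  -- Step D : the bound
  have hα0 : 0 < μ - (p : ℝ) := by linarith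
  have key : |∑ i ∈ Finset.range (j + 1),
        Cgen (μ - (p : ℝ)) (j - i) * caputo μ (a : ℝ) f ((a : ℝ) + ν + i)|
      ≤ Cgen (1 + (μ - (p : ℝ))) j *
        (Finset.range (j + 1)).sup' Finset.nonempty_range_add_one
          (fun i => |caputo μ (a : ℝ) f ((a : ℝ) + ν + i)|) := by
    set M := (Finset.range (j + 1)).sup' Finset.nonempty_range_add_one
      (fun i => |caputo μ (a : ℝ) f ((a : ℝ) + ν + i)|) with hM
    calc |∑ i ∈ Finset.range (j + 1),
          Cgen (μ - (p : ℝ)) (j - i) * caputo μ (a : ℝ) f ((a : ℝ) + ν + i)|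
        ≤ ∑ i ∈ Finset.range (j + 1),
            |Cgen (μ - (p : ℝ)) (j - i) * caputo μ (a : ℝ) f ((a : ℝ) + ν + i)| :=
          Finset.abs_sum_le_sum_abs _ _
      _ ≤ ∑ i ∈ Finset.range (j + 1), Cgen (μ - (p : ℝ)) (j - i) * M := by
          apply Finset.sum_le_sum
          intro i hi
          rw [abs_mul, abs_of_pos (Cgen_pos hα0 (j - i))]
          have hle := Finset.le_sup' (fun i : ℕ => |caputo μ (a : ℝ) f ((a : ℝ) + ν + i)|) hi
          rw [← hM] at hle
          exact mul_le_mul_of_nonneg_left hle (Cgen_pos hα0 (j - i)).le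
      _ = Cgen (1 + (μ - (p : ℝ))) j * M := by
          rw [← Finset.sum_mul, ← Cgen_vandermonde 1 (μ - (p : ℝ)) j]
          congr 1
          apply Finset.sum_congr rfl
          intro i _
          rw [Cgen_one, one_mul]
  -- Step E : rewriting the right-hand coefficient
  have ha1 : 0 < μ - (p : ℝ) + 1 := by linarith
  have hE : gff (t - (a : ℝ) - ν) (μ - (p : ℝ)) / Real.Gamma (μ - (p : ℝ) + 1)
      = Cgen (1 + (μ - (p : ℝ))) j := by
    have hgc := gff_eq_Cgen ha1 j
    rw [(show μ - (p : ℝ) + 1 - 1 = μ - (p : ℝ) by ring)] at hgc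
    have harg : t - (a : ℝ) - ν = μ - (p : ℝ) + (j : ℝ) := by
      rw [htn, hν]
      push_cast [hq]
      ring
    rw [harg, hgc, mul_comm, mul_div_assoc, div_self (Real.Gamma_pos_of_pos ha1).ne', mul_one]
    congr 1
    ring
  rw [stepB, ← stepC, hE]
  exact key
end

section
/- Let μ > p, p ∈ ℤ⁺, μ non-integer, m = ⌈μ⌉, ν = m - μ, f defined on ℕ_a, a ∈ ℤ⁺, b ∈ ℕ with a+m-p < b, and assume Δ^k f(a) = 0 for k = p+1, ..., m-1. Then |(1/(b-a-m+p))·∑_{j=a+m-p+1}^{b} Δ^p f(j) - Δ^p f(a)| ≤ (1/((b-a-m+p)·Γ(μ-p+2)))·[(b-a-ν+1)^(μ-p+1) - Γ(μ-p+2)]·max_{t ∈ {a+ν, ..., b-μ+p}} |Δ_*^μ f(t)|. -/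
open Finset

noncomputable def ccoef (α : ℝ) (k : ℕ) : ℝ :=
  Real.Gamma (α + k) / (Real.Gamma α * k.factorial)

lemma ccoef_zero {α : ℝ} (hα : 0 < α) : ccoef α 0 = 1 := by
  simp [ccoef, (Real.Gamma_pos_of_pos hα).ne']

lemma ccoef_pos {α : ℝ} (hα : 0 < α) (k : ℕ) : 0 < ccoef α k := by
  apply div_pos (Real.Gamma_pos_of_pos (by positivity))
  positivity

lemma ccoef_succ {α : ℝ} (hα : 0 < α) (k : ℕ) :
    ((k : ℝ) + 1) * ccoef α (k + 1) = (α + k) * ccoef α k := by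
  have h1 : Real.Gamma (α + (k + 1 : ℕ)) = (α + k) * Real.Gamma (α + k) := by
    rw [show (α + (k + 1 : ℕ) : ℝ) = (α + k) + 1 by push_cast; ring]
    exact Real.Gamma_add_one (by positivity)
  have h2 : Real.Gamma α ≠ 0 := (Real.Gamma_pos_of_pos hα).ne'
  have h3 : (k.factorial : ℝ) ≠ 0 := by positivity
  simp only [ccoef, h1, Nat.factorial_succ]
  push_cast
  field_simp

lemma ccoef_pascal {α : ℝ} (hα : 0 < α) (k : ℕ) :
    ccoef (α + 1) (k + 1) = ccoef (α + 1) k + ccoef α (k + 1) := by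
  have hx : (0:ℝ) < α + k + 1 := by positivity
  have e1 : α + 1 + ((k + 1 : ℕ) : ℝ) = (α + k + 1) + 1 := by push_cast; ring
  have e2 : α + 1 + ((k : ℕ) : ℝ) = α + k + 1 := by ring
  have e3 : α + ((k + 1 : ℕ) : ℝ) = α + k + 1 := by push_cast; ring
  have h2 : Real.Gamma α ≠ 0 := (Real.Gamma_pos_of_pos hα).ne'
  have h4 : Real.Gamma (α + k + 1) ≠ 0 := (Real.Gamma_pos_of_pos hx).ne'
  have h3 : (k.factorial : ℝ) ≠ 0 := by positivity
  simp only [ccoef, e1, e2, e3, Real.Gamma_add_one hx.ne', Real.Gamma_add_one hα.ne',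
    Nat.factorial_succ]
  push_cast
  field_simp
  ring

lemma ccoef_hockey {α : ℝ} (hα : 0 < α) (n : ℕ) :
    ∑ k ∈ range (n + 1), ccoef α k = ccoef (α + 1) n := by
  induction n with
  | zero => simp [ccoef_zero hα, ccoef_zero (by positivity : (0:ℝ) < α + 1)]
  | succ n ih => rw [sum_range_succ, ih, ccoef_pascal hα]

lemma ccoef_vandermonde {α β : ℝ} (hα : 0 < α) (hβ : 0 < β) (n : ℕ) :
    ∑ k ∈ range (n + 1), ccoef α (n - k) * ccoef β k = ccoef (α + β) n := by
  induction n with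
  | zero => simp [ccoef_zero hα, ccoef_zero hβ, ccoef_zero (by positivity : (0:ℝ) < α + β)]
  | succ n ih =>
    have hne : ((n : ℝ) + 1) ≠ 0 := by positivity
    apply mul_left_cancel₀ hne
    rw [ccoef_succ (by positivity) n, ← ih, Finset.mul_sum, Finset.mul_sum]
    have expand : ∀ k ∈ range (n + 2),
        ((n : ℝ) + 1) * (ccoef α (n + 1 - k) * ccoef β k) =
          ((n + 1 - k : ℕ) : ℝ) * ccoef α (n + 1 - k) * ccoef β k
            + ccoef α (n + 1 - k) * ((k : ℝ) * ccoef β k) := by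
      intro k hk
      have : k ≤ n + 1 := by simpa [Nat.lt_succ_iff] using mem_range.mp hk
      have : ((n + 1 - k : ℕ) : ℝ) = (n : ℝ) + 1 - k := by
        push_cast [Nat.cast_sub this]; ring
      rw [this]; ring
    rw [Finset.sum_congr rfl expand, Finset.sum_add_distrib]
    have T1 : ∑ k ∈ range (n + 2),
        ((n + 1 - k : ℕ) : ℝ) * ccoef α (n + 1 - k) * ccoef β k =
        ∑ k ∈ range (n + 1), ((α + ((n : ℝ) - k)) * ccoef α (n - k)) * ccoef β k := by
      rw [Finset.sum_range_succ]
      simp only [Nat.sub_self, Nat.cast_zero, zero_mul, add_zero]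
      refine Finset.sum_congr rfl fun k hk => ?_
      have hkn : k ≤ n := by simpa [Nat.lt_succ_iff] using mem_range.mp hk
      have h1 : n + 1 - k = (n - k) + 1 := by omega
      rw [h1]
      have hs := ccoef_succ hα (n - k)
      push_cast [Nat.cast_sub hkn] at hs ⊢
      linear_combination (ccoef β k) * hs
    have T2 : ∑ k ∈ range (n + 2), ccoef α (n + 1 - k) * ((k : ℝ) * ccoef β k) =
        ∑ k ∈ range (n + 1), ccoef α (n - k) * ((β + k) * ccoef β k) := by
      rw [Finset.sum_range_succ']
      simp only [Nat.cast_zero, zero_mul, mul_zero, add_zero]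
      refine Finset.sum_congr rfl fun k hk => ?_
      have h1 : n + 1 - (k + 1) = n - k := by omega
      rw [h1, ← ccoef_succ hβ k]
      push_cast
      ring
    rw [T1, T2, ← Finset.sum_add_distrib]
    refine Finset.sum_congr rfl fun k hk => ?_
    ring

lemma ccoef_nat (q k : ℕ) (hq : 1 ≤ q) :
    ccoef (q : ℝ) k = ((q - 1 + k).choose k : ℝ) := by
  obtain ⟨Q, rfl⟩ := Nat.exists_eq_add_of_le hq
  have h3 : 1 + Q - 1 + k = Q + k := by omega
  rw [ccoef, h3,
    show ((1 + Q : ℕ) : ℝ) + (k : ℕ) = ((Q + k : ℕ) : ℝ) + 1 by push_cast; ring,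
    Real.Gamma_nat_eq_factorial,
    show ((1 + Q : ℕ) : ℝ) = ((Q : ℕ) : ℝ) + 1 by push_cast; ring,
    Real.Gamma_nat_eq_factorial]
  have h5 := Nat.choose_mul_factorial_mul_factorial (Nat.le_add_left k Q)
  have h4 : Q + k - k = Q := by omega
  rw [h4] at h5
  rw [← h5]
  have hQ : (Q.factorial : ℝ) ≠ 0 := by positivity
  have hk : (k.factorial : ℝ) ≠ 0 := by positivity
  push_cast
  field_simp

/-- Newton shift formula for `fdiff`. -/
lemma fdiff_shift (h : ℝ → ℝ) (x : ℝ) (q : ℕ) :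
    h (x + q) = ∑ r ∈ range (q + 1), (q.choose r : ℝ) * fdiff^[r] h x := by
  have := shift_eq_sum_fwdDiff_iter (1 : ℝ) h q x
  rw [nsmul_eq_mul, mul_one] at this
  rw [this, fdiff_eq_fwdDiff]
  exact Finset.sum_congr rfl fun r _ => by rw [nsmul_eq_mul]

lemma fdiff_tele (h : ℝ → ℝ) (x : ℝ) (n : ℕ) :
    ∑ j ∈ range n, fdiff h (x + j) = h (x + n) - h x := by
  induction n with
  | zero => simp
  | succ n ih =>
    rw [sum_range_succ, ih]
    simp only [fdiff]
    push_cast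
    ring_nf

/-- Discrete Taylor formula with remainder. -/
lemma fdiff_taylor (Q : ℕ) : ∀ (h : ℝ → ℝ) (x : ℝ) (n : ℕ),
    h (x + Q + 1 + n) =
      (∑ r ∈ range (Q + 1), ((Q + 1 + n).choose r : ℝ) * fdiff^[r] h x)
        + ∑ j ∈ range (n + 1), ((Q + (n - j)).choose (n - j) : ℝ) * fdiff^[Q + 1] h (x + j) := by
  induction Q with
  | zero =>
    intro h x n
    simp only [Nat.choose_self, zero_add, Nat.cast_zero, Nat.cast_ofNat, range_one,
      sum_singleton, Nat.choose_zero_right, Nat.cast_one, one_mul, Function.iterate_zero,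
      id_eq, Nat.zero_add, Nat.cast_one, Function.iterate_one]
    have := fdiff_tele h x (n + 1)
    rw [show x + 0 + 1 + n = x + ((n:ℝ) + 1) by ring]
    push_cast at this
    rw [this]
    ring
  | succ Q ihQ =>
    intro h x n
    induction n with
    | zero =>
      have := fdiff_shift h x (Q + 2)
      rw [Finset.sum_range_succ] at this
      simp only [Nat.choose_self, Nat.cast_one, one_mul] at this
      push_cast at this ⊢
      rw [show x + ((Q:ℝ) + 1) + 1 + 0 = x + ((Q:ℝ) + 2) by ring, this]
      simp
    | succ n ihn =>
      -- h (x + (Q+1) + 1 + (n+1)) = h (x+(Q+1)+1+n) + fdiff h (x+Q+1+(n+1))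
      have hsplit : h (x + (Q + 1 : ℕ) + 1 + (n + 1 : ℕ))
          = h (x + (Q + 1 : ℕ) + 1 + n) + fdiff h (x + (Q : ℕ) + 1 + (n + 1 : ℕ)) := by
        simp only [fdiff]
        push_cast
        ring_nf
      have iQ := ihQ (fdiff h) x (n + 1)
      simp only [← Function.iterate_succ_apply] at iQ
      simp only [Nat.succ_eq_add_one] at iQ
      rw [hsplit, ihn, iQ]
      have c2 : ∀ i : ℕ, (Q + 1 + 1 + (n + 1)).choose (i + 1)
          = (Q + 1 + 1 + n).choose (i + 1) + (Q + 1 + (n + 1)).choose i := by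
        intro i
        have e1 : Q + 1 + 1 + (n + 1) = (Q + 1 + 1 + n) + 1 := by ring
        have e2 : Q + 1 + (n + 1) = Q + 1 + 1 + n := by ring
        rw [e1, e2, Nat.choose_succ_succ]
        ring
      have c1 : ∀ j : ℕ, j ≤ n → (Q + 1 + (n + 1 - j)).choose (n + 1 - j)
          = (Q + 1 + (n - j)).choose (n - j) + (Q + (n + 1 - j)).choose (n + 1 - j) := by
        intro j hj
        have e : n + 1 - j = (n - j) + 1 := by omega
        have e1 : Q + 1 + ((n - j) + 1) = (Q + 1 + (n - j)) + 1 := by ring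
        have e2 : Q + ((n - j) + 1) = Q + 1 + (n - j) := by ring
        rw [e, e1, e2, Nat.choose_succ_succ]
      have EA : ∑ r ∈ Finset.range (Q + 1 + 1), ((Q + 1 + 1 + (n + 1)).choose r : ℝ) * fdiff^[r] h x
          = ∑ r ∈ Finset.range (Q + 1 + 1), ((Q + 1 + 1 + n).choose r : ℝ) * fdiff^[r] h x
            + ∑ r ∈ Finset.range (Q + 1), ((Q + 1 + (n + 1)).choose r : ℝ) * fdiff^[r + 1] h x := by
        rw [Finset.sum_range_succ' (fun r => ((Q + 1 + 1 + (n + 1)).choose r : ℝ) * fdiff^[r] h x) (Q + 1),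
            Finset.sum_range_succ' (fun r => ((Q + 1 + 1 + n).choose r : ℝ) * fdiff^[r] h x) (Q + 1)]
        simp only [Nat.choose_zero_right, Nat.cast_one, one_mul]
        have per : ∀ i ∈ Finset.range (Q + 1),
            ((Q + 1 + 1 + (n + 1)).choose (i + 1) : ℝ) * fdiff^[i + 1] h x
              = ((Q + 1 + 1 + n).choose (i + 1) : ℝ) * fdiff^[i + 1] h x
                + ((Q + 1 + (n + 1)).choose i : ℝ) * fdiff^[i + 1] h x := by
          intro i _
          push_cast [c2 i]
          ring
        rw [Finset.sum_congr rfl per, Finset.sum_add_distrib]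
        ring
      have EB : ∑ j ∈ Finset.range (n + 1 + 1),
            ((Q + 1 + (n + 1 - j)).choose (n + 1 - j) : ℝ) * fdiff^[Q + 1 + 1] h (x + j)
          = (∑ j ∈ Finset.range (n + 1),
              ((Q + 1 + (n - j)).choose (n - j) : ℝ) * fdiff^[Q + 1 + 1] h (x + j))
            + ∑ j ∈ Finset.range (n + 1 + 1),
              ((Q + (n + 1 - j)).choose (n + 1 - j) : ℝ) * fdiff^[Q + 1 + 1] h (x + j) := by
        rw [Finset.sum_range_succ (fun j => ((Q + 1 + (n + 1 - j)).choose (n + 1 - j) : ℝ) * fdiff^[Q + 1 + 1] h (x + j)) (n + 1),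
            Finset.sum_range_succ (fun j => ((Q + (n + 1 - j)).choose (n + 1 - j) : ℝ) * fdiff^[Q + 1 + 1] h (x + j)) (n + 1)]
        simp only [Nat.sub_self, Nat.choose_zero_right, Nat.cast_one, one_mul]
        have per : ∀ j ∈ Finset.range (n + 1),
            ((Q + 1 + (n + 1 - j)).choose (n + 1 - j) : ℝ) * fdiff^[Q + 1 + 1] h (x + j)
              = ((Q + 1 + (n - j)).choose (n - j) : ℝ) * fdiff^[Q + 1 + 1] h (x + j)
                + ((Q + (n + 1 - j)).choose (n + 1 - j) : ℝ) * fdiff^[Q + 1 + 1] h (x + j) := by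
          intro j hj
          have hjn : j ≤ n := by simpa [Nat.lt_succ_iff] using Finset.mem_range.mp hj
          push_cast [c1 j hjn]
          ring
        rw [Finset.sum_congr rfl per, Finset.sum_add_distrib]
        ring
      rw [EA, EB]
      ring

lemma caputo_eval (μ ν : ℝ) (m : ℕ) (hm : m = ⌈μ⌉₊) (hν : ν = m - μ)
    (a : ℕ) (f : ℝ → ℝ) (i : ℕ) (hν0 : 0 < ν) :
    caputo μ (a : ℝ) f ((a : ℝ) + ν + i)
      = ∑ j ∈ Finset.range (i + 1), ccoef ν (i - j) * fdiff^[m] f ((a : ℝ) + j) := by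
  have hG : Real.Gamma ν ≠ 0 := (Real.Gamma_pos_of_pos hν0).ne'
  unfold caputo fsum
  rw [← hm]
  have hνm : (m : ℝ) - μ = ν := hν.symm
  rw [hνm]
  rw [show (a : ℝ) + ν + i - ν - a = (i : ℝ) by ring]
  rw [Int.floor_natCast]
  simp only [Int.toNat_natCast]
  rw [Finset.mul_sum]
  refine Finset.sum_congr rfl fun j hj => ?_
  have hji : j ≤ i := by simpa [Nat.lt_succ_iff] using Finset.mem_range.mp hj
  have e1 : (a : ℝ) + ν + i - (a + j) - 1 + 1 = ν + ((i - j : ℕ) : ℝ) := by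
    push_cast [Nat.cast_sub hji]; ring
  have e2 : (a : ℝ) + ν + i - (a + j) - 1 - (ν - 1) + 1 = ((i - j : ℕ) : ℝ) + 1 := by
    push_cast [Nat.cast_sub hji]; ring
  rw [gff, e1, e2, Real.Gamma_nat_eq_factorial, ccoef]
  have h3 : ((i - j).factorial : ℝ) ≠ 0 := by positivity
  field_simp



theorem stmt13 (μ ν : ℝ) (p : ℕ) (hμ : (p : ℝ) < μ) (hni : ∀ n : ℤ, μ ≠ n)
    (m : ℕ) (hm : m = ⌈μ⌉₊) (hν : ν = m - μ) (f : ℝ → ℝ) (a b : ℕ)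
    (hb : a + m - p < b) (hz : ∀ k, p + 1 ≤ k → k ≤ m - 1 → fdiff^[k] f a = 0) :
    |(1 / ((b : ℝ) - a - m + p)) *
          (∑ j ∈ Finset.Icc (a + m - p + 1) b, fdiff^[p] f (j : ℝ)) -
        fdiff^[p] f a| ≤
      (1 / (((b : ℝ) - a - m + p) * Real.Gamma (μ - p + 2))) *
        (gff ((b : ℝ) - a - ν + 1) (μ - p + 1) - Real.Gamma (μ - p + 2)) *
        (Finset.range (b - (a + m - p) + 1)).sup' ⟨0, Finset.mem_range.mpr (Nat.succ_pos _)⟩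
          (fun i => |caputo μ a f (a + ν + i)|) := by
  -- basic positivity and arithmetic facts
  have hpm : p < m := by
    rw [hm]; exact Nat.lt_ceil.mpr hμ
  have hμ0 : 0 < μ := lt_of_le_of_lt (Nat.cast_nonneg p) hμ
  have hν0 : 0 < ν := by
    rw [hν]
    have h1 : μ ≤ (m : ℝ) := by rw [hm]; exact Nat.le_ceil μ
    have h2 : μ ≠ (m : ℝ) := by
      intro h; exact hni m (by exact_mod_cast h)
    linarith [lt_of_le_of_ne h1 h2]
  obtain ⟨Q, hQ⟩ : ∃ Q, m - p = Q + 1 := ⟨m - p - 1, by omega⟩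
  have hmQ : m = p + (Q + 1) := by omega
  set β := μ - (p : ℝ) with hβdef
  have hβ0 : 0 < β := by rw [hβdef]; linarith
  have hβν : β + ν = ((Q : ℝ) + 1) := by
    rw [hβdef, hν, hmQ]; push_cast; ring
  set N := b - (a + m - p) with hNdef
  have hN1 : 1 ≤ N := by omega
  have hbeq : b = a + m - p + N := by omega
  have hamp : a + m - p = a + (Q + 1) := by omega
  have hD : (b : ℝ) - a - m + p = (N : ℝ) := by
    have : b = a + (Q + 1) + N := by omega
    rw [this, hmQ]; push_cast; ring
  have hGarg : (b : ℝ) - a - ν + 1 = (N : ℝ) + β + 1 := by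
    have : b = a + (Q + 1) + N := by omega
    rw [this, hν, hmQ, hβdef]; push_cast; ring
  have hNpos : (0 : ℝ) < N := by exact_mod_cast Nat.lt_of_lt_of_le Nat.zero_lt_one hN1
  have hNne : ((N : ℝ)) ≠ 0 := hNpos.ne'
  set M := (Finset.range (N + 1)).sup' Finset.nonempty_range_add_one
      (fun i => |caputo μ a f (a + ν + i)|) with hMdef
  have hM : ∀ i : ℕ, i ≤ N → |caputo μ (a : ℝ) f ((a : ℝ) + ν + i)| ≤ M := by
    intro i hi
    exact Finset.le_sup' (fun i : ℕ => |caputo μ (a : ℝ) f ((a : ℝ) + ν + i)|)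
      (Finset.mem_range.mpr (by omega))
  have hM0 : 0 ≤ M := le_trans (abs_nonneg _) (hM 0 (by omega))
  -- the key representation identity
  have key : ∀ n : ℕ, fdiff^[p] f ((a : ℝ) + (Q + 1 : ℕ) + n)
      = fdiff^[p] f (a : ℝ)
        + ∑ i ∈ Finset.range (n + 1), ccoef β (n - i) * caputo μ (a : ℝ) f ((a : ℝ) + ν + i) := by
    intro n
    have hrw : ∀ i ∈ Finset.range (n + 1),
        ccoef β (n - i) * caputo μ (a : ℝ) f ((a : ℝ) + ν + i)
          = ∑ j ∈ Finset.range (i + 1),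
              ccoef β (n - i) * (ccoef ν (i - j) * fdiff^[m] f ((a : ℝ) + j)) := by
      intro i _
      rw [caputo_eval μ ν m hm hν a f i hν0, Finset.mul_sum]
    rw [Finset.sum_congr rfl hrw]
    have swap := Finset.sum_Ico_Ico_comm 0 (n + 1) (fun i j =>
      ccoef β (n - j) * (ccoef ν (j - i) * fdiff^[m] f ((a : ℝ) + i)))
    simp only [← Finset.range_eq_Ico] at swap
    rw [← swap]
    -- now inner sums over Ico j (n+1); reduce via Vandermonde
    have inner : ∀ j ∈ Finset.range (n + 1),
        ∑ i ∈ Finset.Ico j (n + 1), ccoef β (n - i) * (ccoef ν (i - j) * fdiff^[m] f ((a : ℝ) + j))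
          = (((Q + (n - j)).choose (n - j) : ℕ) : ℝ) * fdiff^[m] f ((a : ℝ) + j) := by
      intro j hj
      have hjn : j ≤ n := by simpa [Nat.lt_succ_iff] using Finset.mem_range.mp hj
      rw [Finset.sum_Ico_eq_sum_range]
      have hcard : n + 1 - j = (n - j) + 1 := by omega
      rw [hcard]
      have per : ∀ k ∈ Finset.range ((n - j) + 1),
          ccoef β (n - (j + k)) * (ccoef ν ((j + k) - j) * fdiff^[m] f ((a : ℝ) + j))
            = (ccoef β ((n - j) - k) * ccoef ν k) * fdiff^[m] f ((a : ℝ) + j) := by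
        intro k _
        have e1 : n - (j + k) = (n - j) - k := by omega
        have e2 : (j + k) - j = k := by omega
        rw [e1, e2]; ring
      rw [Finset.sum_congr rfl per, ← Finset.sum_mul, ccoef_vandermonde hβ0 hν0, hβν]
      congr 1
      rw [show ((Q : ℝ) + 1) = ((Q + 1 : ℕ) : ℝ) by push_cast; ring,
        ccoef_nat (Q + 1) (n - j) (by omega)]
      norm_num
    rw [Finset.sum_congr rfl inner]
    -- apply the discrete Taylor formula
    have tay := fdiff_taylor Q (fdiff^[p] f) (a : ℝ) n
    have hop : fdiff^[Q + 1] (fdiff^[p] f) = fdiff^[m] f := by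
      rw [← Function.iterate_add_apply, show Q + 1 + p = m from by omega]
    rw [hop] at tay
    have hzero : ∑ r ∈ Finset.range (Q + 1), ((Q + 1 + n).choose r : ℝ) * fdiff^[r] (fdiff^[p] f) (a : ℝ)
        = fdiff^[p] f (a : ℝ) := by
      rw [Finset.sum_range_succ']
      have hz' : ∀ i ∈ Finset.range Q, ((Q + 1 + n).choose (i + 1) : ℝ) * fdiff^[i + 1] (fdiff^[p] f) (a : ℝ) = 0 := by
        intro i hi
        have hiQ : i < Q := Finset.mem_range.mp hi
        have : fdiff^[i + 1] (fdiff^[p] f) (a : ℝ) = fdiff^[i + 1 + p] f (a : ℝ) := by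
          rw [← Function.iterate_add_apply]
        rw [this, hz (i + 1 + p) (by omega) (by omega)]
        ring
      rw [Finset.sum_congr rfl hz', Finset.sum_const_zero]
      simp
    rw [hzero] at tay
    rw [show (a : ℝ) + ((Q + 1 : ℕ) : ℝ) + n = (a : ℝ) + (Q : ℕ) + 1 + n by push_cast; ring]
    rw [tay]
  -- rewrite goal
  rw [hD, hGarg]
  have hsum : ∑ j ∈ Finset.Icc (a + m - p + 1) b, fdiff^[p] f (j : ℝ)
      = (N : ℝ) * fdiff^[p] f (a : ℝ)
        + ∑ k ∈ Finset.range N, ∑ i ∈ Finset.range (k + 1 + 1),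
            ccoef β (k + 1 - i) * caputo μ (a : ℝ) f ((a : ℝ) + ν + i) := by
    rw [← Finset.Ico_add_one_right_eq_Icc, Finset.sum_Ico_eq_sum_range]
    have hcard : b + 1 - (a + m - p + 1) = N := by omega
    rw [hcard]
    have per : ∀ k ∈ Finset.range N, fdiff^[p] f ((a + m - p + 1 + k : ℕ) : ℝ)
        = fdiff^[p] f (a : ℝ) + ∑ i ∈ Finset.range (k + 1 + 1),
            ccoef β (k + 1 - i) * caputo μ (a : ℝ) f ((a : ℝ) + ν + i) := by
      intro k _
      have harg : ((a + m - p + 1 + k : ℕ) : ℝ)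
          = (a : ℝ) + ((Q + 1 : ℕ) : ℝ) + ((k + 1 : ℕ) : ℝ) := by
        rw [show a + m - p + 1 + k = a + (Q + 1) + (k + 1) from by omega]
        push_cast; ring
      rw [harg, key (k + 1)]
    rw [Finset.sum_congr rfl per, Finset.sum_add_distrib, Finset.sum_const, Finset.card_range,
      nsmul_eq_mul]
  rw [hsum]
  set S2 := ∑ k ∈ Finset.range N, ∑ i ∈ Finset.range (k + 1 + 1),
      ccoef β (k + 1 - i) * caputo μ (a : ℝ) f ((a : ℝ) + ν + i) with hS2
  have habs : |1 / (N : ℝ) * ((N : ℝ) * fdiff^[p] f (a : ℝ) + S2) - fdiff^[p] f (a : ℝ)|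
      = |S2| / N := by
    rw [show 1 / (N : ℝ) * ((N : ℝ) * fdiff^[p] f (a : ℝ) + S2) - fdiff^[p] f (a : ℝ)
        = S2 / N from by field_simp; ring]
    rw [abs_div, abs_of_pos hNpos]
  rw [habs]
  have hhk : ∀ k : ℕ, ∑ i ∈ Finset.range (k + 1 + 1), ccoef β (k + 1 - i)
      = ccoef (β + 1) (k + 1) := by
    intro k
    have e : ∑ i ∈ Finset.range (k + 1 + 1), ccoef β (k + 1 - i)
        = ∑ i ∈ Finset.range (k + 1 + 1), ccoef β (k + 1 + 1 - 1 - i) :=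
      Finset.sum_congr rfl fun j _ => congrArg (ccoef β) (by omega)
    rw [e, Finset.sum_range_reflect (fun i => ccoef β i) (k + 1 + 1), ccoef_hockey hβ0]
  have hsum2 : ∑ k ∈ Finset.range N, ccoef (β + 1) (k + 1) = ccoef (β + 1 + 1) N - 1 := by
    have h1 := ccoef_hockey (show (0:ℝ) < β + 1 by positivity) N
    rw [Finset.sum_range_succ', ccoef_zero (show (0:ℝ) < β + 1 by positivity)] at h1
    linarith
  have hSb : |S2| ≤ (ccoef (β + 1 + 1) N - 1) * M := by
    calc |S2| ≤ ∑ k ∈ Finset.range N, |∑ i ∈ Finset.range (k + 1 + 1),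
        ccoef β (k + 1 - i) * caputo μ (a : ℝ) f ((a : ℝ) + ν + i)| :=
          Finset.abs_sum_le_sum_abs _ _
    _ ≤ ∑ k ∈ Finset.range N, ccoef (β + 1) (k + 1) * M := by
        refine Finset.sum_le_sum fun k hk => ?_
        have hkN : k < N := Finset.mem_range.mp hk
        calc |∑ i ∈ Finset.range (k + 1 + 1), ccoef β (k + 1 - i) * caputo μ (a : ℝ) f ((a : ℝ) + ν + i)|
            ≤ ∑ i ∈ Finset.range (k + 1 + 1), |ccoef β (k + 1 - i) * caputo μ (a : ℝ) f ((a : ℝ) + ν + i)| :=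
              Finset.abs_sum_le_sum_abs _ _
          _ ≤ ∑ i ∈ Finset.range (k + 1 + 1), ccoef β (k + 1 - i) * M := by
              refine Finset.sum_le_sum fun i hi => ?_
              have hiN : i ≤ N := by
                have := Finset.mem_range.mp hi; omega
              rw [abs_mul, abs_of_pos (ccoef_pos hβ0 _)]
              exact mul_le_mul_of_nonneg_left (hM i hiN) (ccoef_pos hβ0 _).le
          _ = ccoef (β + 1) (k + 1) * M := by rw [← Finset.sum_mul, hhk k]
    _ = (ccoef (β + 1 + 1) N - 1) * M := by rw [← Finset.sum_mul, hsum2]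
  have hfinal : 1 / ((N : ℝ) * Real.Gamma (β + 2)) * (gff ((N : ℝ) + β + 1) (β + 1)
        - Real.Gamma (β + 2)) * M = ((ccoef (β + 1 + 1) N - 1) * M) / N := by
    have hGb : Real.Gamma (β + 2) ≠ 0 := (Real.Gamma_pos_of_pos (by positivity)).ne'
    have hNf : ((N.factorial : ℕ) : ℝ) ≠ 0 := by positivity
    have hGb2 : Real.Gamma (β + 1 + 1) ≠ 0 := (Real.Gamma_pos_of_pos (by positivity)).ne'
    rw [gff, show (N : ℝ) + β + 1 + 1 = β + 1 + 1 + (N : ℝ) from by ring,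
      show (N : ℝ) + β + 1 - (β + 1) + 1 = (N : ℝ) + 1 from by ring,
      Real.Gamma_nat_eq_factorial, ccoef,
      show β + 2 = β + 1 + 1 from by ring]
    field_simp
  rw [hfinal]
  exact div_le_div_of_nonneg_right hSb hNpos.le
end
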